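/- arXiv:1611.03962 — 7 statements merged into one kernel-verified Lean document; each statement's English description precedes it below -/
import Mathlib

section
/- The determinant of the Jacobian matrix (∂σ_j/∂x_i)_{1≤i,j≤n}, where σ_j is the j-th elementary symmetric polynomial in x_1,…,x_n, equals (up to sign) the Vandermonde determinant ∏_{1≤i<j≤n}(x_i − x_j). -/
open MvPolynomial Finset

variable {K : Type} [Field K] [CharZero K] {n : ℕ}

/-- elementary symmetric polynomial in the variables other than `i`. -/
noncomputable def esymmErase (n : ℕ) (K : Type) [Field K] (i : Fin n) (k : ℕ) :
    MvPolynomial (Fin n) K :=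
  ∑ t ∈ powersetCard k ((univ : Finset (Fin n)).erase i), ∏ j ∈ t, X j

lemma pderiv_prod_X_eq_zero (i : Fin n) (t : Finset (Fin n)) (hi : i ∉ t) :
    pderiv i (∏ j ∈ t, (X j : MvPolynomial (Fin n) K)) = 0 := by
  induction t using Finset.induction with
  | empty => simp
  | @insert a s h ih =>
    rw [Finset.prod_insert h, pderiv_mul, ih (fun hmem => hi (Finset.mem_insert_of_mem hmem)),
      pderiv_X_of_ne (fun hai => hi (by rw [hai]; exact Finset.mem_insert_self i s))]
    ring

lemma esymm_split (i : Fin n) (k : ℕ) :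
    esymm (Fin n) K (k + 1) = esymmErase n K i (k + 1) + X i * esymmErase n K i k := by
  classical
  have hins : (univ : Finset (Fin n)) = insert i ((univ : Finset (Fin n)).erase i) :=
    (Finset.insert_erase (mem_univ i)).symm
  have hpc : powersetCard (k + 1) (univ : Finset (Fin n)) =
      powersetCard (k + 1) ((univ : Finset (Fin n)).erase i) ∪
        (powersetCard k ((univ : Finset (Fin n)).erase i)).image (insert i) := by
    conv_lhs => rw [hins]
    exact Finset.powersetCard_succ_insert (Finset.notMem_erase i univ) k
  rw [esymm, esymmErase, esymmErase, hpc]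
  rw [Finset.sum_union]
  · congr 1
    rw [Finset.sum_image]
    · rw [Finset.mul_sum]
      refine Finset.sum_congr rfl fun t ht => ?_
      have hit : i ∉ t := fun h => Finset.notMem_erase i univ
        ((Finset.mem_powersetCard.mp ht).1 h)
      rw [Finset.prod_insert hit]
    · intro a ha b hb hab
      have hia : i ∉ a := fun h => Finset.notMem_erase i univ
        ((Finset.mem_powersetCard.mp ha).1 h)
      have hib : i ∉ b := fun h => Finset.notMem_erase i univ
        ((Finset.mem_powersetCard.mp hb).1 h)
      have := congrArg (fun s => Finset.erase s i) hab
      simpa [Finset.erase_insert hia, Finset.erase_insert hib] using this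
  · rw [Finset.disjoint_right]
    intro t ht ht'
    obtain ⟨s, hs, rfl⟩ := Finset.mem_image.mp ht
    exact Finset.notMem_erase i univ
      ((Finset.mem_powersetCard.mp ht').1 (Finset.mem_insert_self i s))

lemma pderiv_esymmErase (i : Fin n) (k : ℕ) :
    pderiv i (esymmErase n K i k) = 0 := by
  rw [esymmErase, map_sum]
  refine Finset.sum_eq_zero fun t ht => ?_
  refine pderiv_prod_X_eq_zero i t fun hi => ?_
  exact Finset.notMem_erase i univ ((Finset.mem_powersetCard.mp ht).1 hi)

lemma pderiv_esymm (i : Fin n) (k : ℕ) :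
    pderiv i (esymm (Fin n) K (k + 1)) = esymmErase n K i k := by
  rw [esymm_split i k, map_add, pderiv_esymmErase, pderiv_mul, pderiv_esymmErase,
    pderiv_X_self]
  ring

lemma esymmErase_eq_sum (i : Fin n) (k : ℕ) :
    esymmErase n K i k =
      ∑ m ∈ Finset.range (k + 1), (-X i) ^ m * esymm (Fin n) K (k - m) := by
  induction k with
  | zero =>
    simp [esymmErase]
  | succ k ih =>
    have h := esymm_split (K := K) i k
    have : esymmErase n K i (k + 1) = esymm (Fin n) K (k + 1) - X i * esymmErase n K i k := by
      rw [h]; ring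
    rw [this, ih,
      Finset.sum_range_succ' (fun m => (-X i) ^ m * esymm (Fin n) K (k + 1 - m)) (k + 1)]
    simp only [Nat.succ_sub_succ, pow_zero, Nat.sub_zero, one_mul, Finset.mul_sum]
    rw [sub_eq_add_neg, add_comm]
    congr 1
    rw [← Finset.sum_neg_distrib]
    refine Finset.sum_congr rfl fun m _ => ?_
    rw [pow_succ]
    ring

/-- The determinant of the Jacobian matrix `(∂σ_j/∂x_i)` of the elementary symmetric
polynomials equals, up to sign, the Vandermonde determinant `∏_{i<j} (x_i - x_j)`. -/
theorem jacobian_esymm_det (K : Type) [Field K] [CharZero K] (n : ℕ)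
    (M : Matrix (Fin n) (Fin n) (MvPolynomial (Fin n) K))
    (hM : ∀ i j : Fin n, M i j = pderiv i (esymm (Fin n) K ((j : ℕ) + 1))) :
    M.det = ∏ i : Fin n, ∏ j ∈ Finset.Ioi i, (X i - X j) ∨
      M.det = -∏ i : Fin n, ∏ j ∈ Finset.Ioi i, (X i - X j) := by
  left
  set W : Matrix (Fin n) (Fin n) (MvPolynomial (Fin n) K) :=
    Matrix.vandermonde (fun i => -X i) with hW
  set B : Matrix (Fin n) (Fin n) (MvPolynomial (Fin n) K) :=
    Matrix.of fun k j => if (k : ℕ) ≤ (j : ℕ) then esymm (Fin n) K ((j : ℕ) - (k : ℕ)) else 0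
    with hB
  have hMWB : M = W * B := by
    refine Matrix.ext fun i j => ?_
    rw [hM i j, pderiv_esymm, esymmErase_eq_sum, Matrix.mul_apply]
    have hsum : ∑ k : Fin n, W i k * B k j =
        ∑ m ∈ Finset.range n,
          (if m ≤ (j : ℕ) then (-X i) ^ m * esymm (Fin n) K ((j : ℕ) - m) else 0) := by
      rw [← Fin.sum_univ_eq_sum_range
        (fun m => if m ≤ (j : ℕ) then (-X i) ^ m * esymm (Fin n) K ((j : ℕ) - m) else 0) n]
      refine Finset.sum_congr rfl fun k _ => ?_
      simp only [hW, hB, Matrix.vandermonde_apply, Matrix.of_apply, mul_ite, mul_zero]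
    rw [hsum]
    have h2 : ∑ m ∈ Finset.range ((j : ℕ) + 1), (-X i) ^ m * esymm (Fin n) K ((j : ℕ) - m)
        = ∑ m ∈ Finset.range ((j : ℕ) + 1),
          (if m ≤ (j : ℕ) then (-X i) ^ m * esymm (Fin n) K ((j : ℕ) - m) else 0) := by
      refine Finset.sum_congr rfl fun m hm => ?_
      rw [if_pos (Nat.lt_succ_iff.mp (Finset.mem_range.mp hm))]
    rw [h2]
    refine Finset.sum_subset
      (f := fun m => if m ≤ (j : ℕ) then (-X i) ^ m * esymm (Fin n) K ((j : ℕ) - m) else 0)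
      (Finset.range_subset_range.mpr j.isLt) fun m _ hm => ?_
    exact if_neg fun hle => hm (Finset.mem_range.mpr (Nat.lt_succ_of_le hle))
  have hdetB : B.det = 1 := by
    have htri : B.BlockTriangular id := by
      intro k j hjk
      exact if_neg (by simpa using hjk)
    rw [Matrix.det_of_upperTriangular htri]
    refine Finset.prod_eq_one fun k _ => ?_
    simp [hB]
  rw [hMWB, Matrix.det_mul, hdetB, mul_one, hW, Matrix.det_vandermonde]
  refine Finset.prod_congr rfl fun i _ => Finset.prod_congr rfl fun j _ => by ring
end

section
/- If k > n, then the Vandermonde polynomial w_n = ∏_{1≤i<j≤n}(x_i − x_j) is nonzero in the Milnor ring k[x_1,…,x_n]/(x_1^{k−1},…,x_n^{k−1}). -/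
open MvPolynomial

noncomputable def milnorIdeal (K : Type) [Field K] (n k : ℕ) : Ideal (MvPolynomial (Fin n) K) :=
  Ideal.span (Set.range fun i : Fin n => (X i : MvPolynomial (Fin n) K) ^ (k - 1))

noncomputable abbrev MilnorRing (K : Type) [Field K] (n k : ℕ) :=
  MvPolynomial (Fin n) K ⧸ milnorIdeal K n k

noncomputable def permAct (K : Type) [Field K] (n k : ℕ) (σ : Equiv.Perm (Fin n)) :
    MilnorRing K n k →ₐ[K] MilnorRing K n k :=
  Ideal.Quotient.liftₐ (milnorIdeal K n k)
    ((Ideal.Quotient.mkₐ K (milnorIdeal K n k)).comp (rename σ)) (by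
      intro a ha
      simp only [AlgHom.comp_apply, Ideal.Quotient.mkₐ_eq_mk]
      rw [Ideal.Quotient.eq_zero_iff_mem]
      have hmap : (milnorIdeal K n k).map (rename (R := K) σ) ≤ milnorIdeal K n k := by
        rw [milnorIdeal, Ideal.map_span]
        apply Ideal.span_le.2
        rintro _ ⟨_, ⟨i, rfl⟩, rfl⟩
        simp only [map_pow, rename_X]
        exact Ideal.subset_span ⟨σ i, rfl⟩
      exact hmap (Ideal.mem_map_of_mem _ ha))

noncomputable def vandermonde (K : Type) [Field K] (n : ℕ) : MvPolynomial (Fin n) K :=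
  ∏ i : Fin n, ∏ j ∈ Finset.Ioi i, (X i - X j)

noncomputable def antisym (K : Type) [Field K] (n k : ℕ) : Submodule K (MilnorRing K n k) :=
  ⨅ σ : Equiv.Perm (Fin n),
    Module.End.eigenspace (permAct K n k σ).toLinearMap ((Equiv.Perm.sign σ : ℤ) : K)

noncomputable def invSubalg (K : Type) [Field K] (n k : ℕ) : Subalgebra K (MilnorRing K n k) where
  carrier := {a | ∀ σ, permAct K n k σ a = a}
  mul_mem' := fun ha hb => fun σ => by rw [map_mul, ha σ, hb σ]
  add_mem' := fun ha hb => fun σ => by rw [map_add, ha σ, hb σ]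
  one_mem' := fun σ => map_one _
  zero_mem' := fun σ => map_zero _
  algebraMap_mem' := fun r σ => (permAct K n k σ).commutes r


noncomputable def stair (n : ℕ) : Fin n →₀ ℕ := ∑ i : Fin n, Finsupp.single i (i : ℕ)

lemma stair_apply {n : ℕ} (j : Fin n) : stair n j = (j : ℕ) := by
  classical
  simp only [stair, Finsupp.finset_sum_apply, Finsupp.single_apply]
  simp

lemma coeff_stair_det (K : Type) [Field K] (n : ℕ) :
    coeff (stair n)
      (Matrix.det (Matrix.vandermonde fun i => (X i : MvPolynomial (Fin n) K))) = 1 := by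
  classical
  rw [Matrix.det_apply']
  have key : ∀ σ : Equiv.Perm (Fin n),
      (∏ i : Fin n, Matrix.vandermonde (fun i => (X i : MvPolynomial (Fin n) K)) (σ i) i)
        = monomial (∑ i : Fin n, Finsupp.single (σ i) (i : ℕ)) (1 : K) := by
    intro σ
    rw [monomial_sum_one]
    refine Finset.prod_congr rfl fun i _ => ?_
    rw [Matrix.vandermonde_apply, X_pow_eq_monomial]
  have hc : ∀ m : ℤ, ((m : ℤ) : MvPolynomial (Fin n) K) = C ((m : ℤ) : K) :=
    fun m => (map_intCast (C : K →+* MvPolynomial (Fin n) K) m).symm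
  rw [Finset.sum_congr rfl fun σ _ => by
    rw [key σ, show ((Equiv.Perm.sign σ : ℤ) : MvPolynomial (Fin n) K) = C ((Equiv.Perm.sign σ : ℤ) : K) from hc _]]
  rw [coeff_sum]
  rw [Finset.sum_congr rfl fun σ _ => coeff_C_mul _ _ _]
  rw [Finset.sum_eq_single (1 : Equiv.Perm (Fin n))]
  · simp [stair]
  · intro σ _ hσ
    rw [coeff_monomial, if_neg, mul_zero]
    intro heq
    apply hσ
    ext i
    have h2 := congrArg (fun f : Fin n →₀ ℕ => f (σ i)) heq
    simp only [stair_apply, Finsupp.finset_sum_apply, Finsupp.single_apply] at h2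
    have h3 : (∑ i' : Fin n, if σ i' = σ i then (i' : ℕ) else 0) = (i : ℕ) := by
      rw [Finset.sum_congr rfl fun i' _ => by
        rw [show (if σ i' = σ i then (i' : ℕ) else 0) = if i' = i then (i' : ℕ) else 0 by
          simp [σ.injective.eq_iff]]]
      simp
    rw [h3] at h2
    simpa using h2.symm
  · simp

lemma coeff_stair_vdm (K : Type) [Field K] (n : ℕ) :
    coeff (stair n) (∏ i : Fin n, ∏ j ∈ Finset.Ioi i, (X i - X j : MvPolynomial (Fin n) K))
      ≠ 0 := by
  classical
  have h1 : (∏ i : Fin n, ∏ j ∈ Finset.Ioi i, (X i - X j : MvPolynomial (Fin n) K))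
      = C ((-1 : K) ^ (∑ i : Fin n, (Finset.Ioi i).card)) *
        Matrix.det (Matrix.vandermonde fun i => (X i : MvPolynomial (Fin n) K)) := by
    rw [Matrix.det_vandermonde, map_pow, map_neg, map_one,
      ← Finset.prod_pow_eq_pow_sum, ← Finset.prod_mul_distrib]
    refine Finset.prod_congr rfl fun i _ => ?_
    rw [← Finset.prod_const, ← Finset.prod_mul_distrib]
    refine Finset.prod_congr rfl fun j _ => ?_
    ring
  rw [h1, coeff_C_mul, coeff_stair_det, mul_one]
  exact pow_ne_zero _ (by norm_num)

/-- For `k > n`, the Vandermonde polynomial is nonzero in the Milnor ring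
`K[x_1,…,x_n]/(x_1^{k-1},…,x_n^{k-1})`. -/
theorem vandermonde_ne_zero_in_milnor (K : Type) [Field K] [CharZero K] (n k : ℕ)
    (hk : n < k) :
    Ideal.Quotient.mk (milnorIdeal K n k) (vandermonde K n) ≠ 0 := by
  classical
  rw [Ne, Ideal.Quotient.eq_zero_iff_mem]
  intro hmem
  have hzero : ∀ p ∈ milnorIdeal K n k, ∀ q : MvPolynomial (Fin n) K,
      coeff (stair n) (q * p) = 0 := by
    intro p hp
    refine Submodule.span_induction ?_ ?_ ?_ ?_ hp
    · rintro _ ⟨i, rfl⟩ q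
      show coeff (stair n) (q * X i ^ (k - 1)) = 0
      rw [X_pow_eq_monomial, coeff_mul_monomial', if_neg]
      intro hle
      have h1 := hle i
      rw [Finsupp.single_apply, if_pos rfl, stair_apply] at h1
      omega
    · intro q; rw [mul_zero, coeff_zero]
    · intro x y _ _ hx hy q
      rw [mul_add, coeff_add, hx q, hy q, add_zero]
    · intro a x _ hx q
      rw [smul_eq_mul, ← mul_assoc, hx (q * a)]
  have h := hzero _ hmem 1
  rw [one_mul] at h
  exact coeff_stair_vdm K n h
end

section
/- The space of S_n-antisymmetric elements of the Milnor ring k[x_1,…,x_n]/(x_1^{k−1},…,x_n^{k−1}), with k > n, has dimension equal to the binomial coefficient C(k−1, n). -/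
open MvPolynomial

namespace AntiAux

variable {K : Type} [Field K] [CharZero K] {n k : ℕ}

noncomputable def eps (K : Type) [Field K] {n : ℕ} (σ : Equiv.Perm (Fin n)) : K :=
  ((Equiv.Perm.sign σ : ℤ) : K)

lemma eps_mul (σ τ : Equiv.Perm (Fin n)) : eps K (σ * τ) = eps K σ * eps K τ := by
  simp [eps]

lemma eps_one : eps K (1 : Equiv.Perm (Fin n)) = 1 := by simp [eps]

lemma eps_inv (σ : Equiv.Perm (Fin n)) : eps K σ⁻¹ = eps K σ := by
  simp [eps]

lemma eps_mul_self (σ : Equiv.Perm (Fin n)) : eps K σ * eps K σ = 1 := by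
  simp [eps, ← Int.cast_mul, ← Units.val_mul]

noncomputable def asym (K : Type) [Field K] {n : ℕ} (d : Fin n →₀ ℕ) :
    MvPolynomial (Fin n) K :=
  ∑ σ : Equiv.Perm (Fin n), eps K σ • monomial (d.mapDomain σ) (1 : K)

lemma mapDomain_perm_mul (σ τ : Equiv.Perm (Fin n)) (d : Fin n →₀ ℕ) :
    d.mapDomain ⇑(σ * τ) = (d.mapDomain ⇑τ).mapDomain ⇑σ := by
  rw [← Finsupp.mapDomain_comp]; rfl

lemma rename_asym (τ : Equiv.Perm (Fin n)) (d : Fin n →₀ ℕ) :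
    rename ⇑τ (asym K d) = eps K τ • asym K d := by
  rw [asym, map_sum, Finset.smul_sum]
  refine Fintype.sum_equiv (Equiv.mulLeft τ) _ _ (fun σ => ?_)
  rw [LinearMapClass.map_smul, rename_monomial, ← mapDomain_perm_mul, smul_smul]
  simp only [Equiv.coe_mulLeft]
  congr 1
  rw [eps_mul, ← mul_assoc, eps_mul_self, one_mul]

lemma asym_mapDomain (π : Equiv.Perm (Fin n)) (d : Fin n →₀ ℕ) :
    asym K (d.mapDomain ⇑π) = eps K π • asym K d := by
  rw [asym, asym, Finset.smul_sum]
  refine Fintype.sum_equiv (Equiv.mulRight π) _ _ (fun σ => ?_)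
  simp only [Equiv.coe_mulRight]
  rw [← mapDomain_perm_mul, smul_smul]
  congr 1
  rw [eps_mul]
  ring_nf
  simp [sq, eps_mul_self]

set_option linter.unusedSectionVars false

lemma mapDomain_perm_apply (σ : Equiv.Perm (Fin n)) (d : Fin n →₀ ℕ) (a : Fin n) :
    d.mapDomain ⇑σ (σ a) = d a :=
  Finsupp.mapDomain_apply σ.injective d a

lemma asym_eq_zero (d : Fin n →₀ ℕ) (h : ¬ Function.Injective ⇑d) : asym K d = 0 := by
  simp only [Function.Injective, not_forall] at h
  obtain ⟨i, j, hij, hne⟩ := h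
  have hswap : d.mapDomain ⇑(Equiv.swap i j) = d := by
    ext x
    by_cases hxi : x = i
    · subst hxi
      have := mapDomain_perm_apply (Equiv.swap x j) d j
      rwa [Equiv.swap_apply_right, ← hij] at this
    by_cases hxj : x = j
    · subst hxj
      have := mapDomain_perm_apply (Equiv.swap i x) d i
      rwa [Equiv.swap_apply_left, hij] at this
    · have := mapDomain_perm_apply (Equiv.swap i j) d x
      rwa [Equiv.swap_apply_of_ne_of_ne hxi hxj] at this
  have key : asym K (n := n) d = -asym K d := by
    nth_rewrite 1 [asym]
    rw [asym, ← Finset.sum_neg_distrib]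
    refine Fintype.sum_equiv (Equiv.mulRight (Equiv.swap i j)) _ _ (fun σ => ?_)
    simp only [Equiv.coe_mulRight]
    rw [mapDomain_perm_mul σ (Equiv.swap i j), hswap, ← neg_smul]
    congr 1
    have hs : eps K (Equiv.swap i j) = (-1 : K) := by
      simp [eps, Equiv.Perm.sign_swap hne]
    rw [eps_mul, hs]
    ring
  have h2 : (2 : K) • asym K (n := n) d = 0 := by
    rw [two_smul]
    nth_rewrite 1 [key]
    simp
  simpa [smul_eq_zero] using h2

lemma coeff_asym (d e : Fin n →₀ ℕ) :
    coeff e (asym K d) = ∑ σ : Equiv.Perm (Fin n),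
      (if d.mapDomain ⇑σ = e then eps K σ else 0) := by
  rw [asym]
  simp only [coeff_sum]
  refine Finset.sum_congr rfl (fun σ _ => ?_)
  rw [coeff_smul, coeff_monomial]
  split <;> simp

lemma range_mapDomain_perm (σ : Equiv.Perm (Fin n)) (d : Fin n →₀ ℕ) :
    Set.range ⇑(d.mapDomain ⇑σ) = Set.range ⇑d := by
  ext x
  constructor
  · rintro ⟨a, rfl⟩
    refine ⟨σ.symm a, ?_⟩
    have := mapDomain_perm_apply σ d (σ.symm a)
    rw [Equiv.apply_symm_apply] at this
    exact this.symm
  · rintro ⟨a, rfl⟩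
    exact ⟨σ a, mapDomain_perm_apply σ d a⟩

lemma coeff_asym_self (d : Fin n →₀ ℕ) (hd : Function.Injective ⇑d) :
    coeff d (asym K d) = 1 := by
  rw [coeff_asym]
  rw [Finset.sum_eq_single 1]
  · simp [eps_one]
  · intro σ _ hσ
    rw [if_neg]
    intro h
    apply hσ
    apply Equiv.ext
    intro a
    have h1 := mapDomain_perm_apply σ d a
    rw [h] at h1
    simpa using hd h1
  · simp

lemma monomial_mem_milnorIdeal (e : Fin n →₀ ℕ) (c : K) (j : Fin n) (hj : k - 1 ≤ e j) :
    monomial e c ∈ milnorIdeal K n k := by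
  have he : e = (e - Finsupp.single j (k - 1)) + Finsupp.single j (k - 1) := by
    ext x
    rcases eq_or_ne x j with rfl | hx
    · simp [Nat.sub_add_cancel hj]
    · simp [Finsupp.single_apply, Ne.symm hx]
  have : monomial e c =
      monomial (e - Finsupp.single j (k - 1)) c * (X j : MvPolynomial (Fin n) K) ^ (k - 1) := by
    rw [X_pow_eq_monomial, monomial_mul, mul_one, ← he]
  rw [this]
  exact Ideal.mul_mem_left _ _ (Ideal.subset_span ⟨j, rfl⟩)

lemma asym_mem_milnorIdeal (d : Fin n →₀ ℕ) (j : Fin n) (hj : k - 1 ≤ d j) :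
    asym K d ∈ milnorIdeal K n k := by
  rw [asym]
  refine Submodule.sum_mem _ (fun σ _ => ?_)
  rw [smul_monomial]
  exact monomial_mem_milnorIdeal _ _ (σ j) (by rwa [mapDomain_perm_apply])

lemma coeff_eq_zero_of_mem_milnorIdeal {p : MvPolynomial (Fin n) K}
    (hp : p ∈ milnorIdeal K n k) (e : Fin n →₀ ℕ) (he : ∀ i, e i < k - 1) :
    coeff e p = 0 := by
  rw [milnorIdeal, Ideal.span, Submodule.mem_span_range_iff_exists_fun] at hp
  obtain ⟨c, rfl⟩ := hp
  rw [coeff_sum]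
  refine Finset.sum_eq_zero (fun j _ => ?_)
  rw [smul_eq_mul, X_pow_eq_monomial, coeff_mul_monomial']
  rw [if_neg]
  rw [Finsupp.single_le_iff]
  exact Nat.not_le.2 (he j)

lemma sum_eps_rename (p : MvPolynomial (Fin n) K) :
    ∑ σ : Equiv.Perm (Fin n), eps K σ • rename ⇑σ p
      = ∑ d ∈ p.support, coeff d p • asym K d := by
  have hp : ∀ σ : Equiv.Perm (Fin n),
      rename ⇑σ p = ∑ d ∈ p.support, coeff d p • monomial (d.mapDomain ⇑σ) (1:K) := by
    intro σ
    conv_lhs => rw [p.as_sum]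
    rw [map_sum]
    refine Finset.sum_congr rfl fun d _ => ?_
    rw [rename_monomial, smul_monomial, smul_eq_mul, mul_one]
  rw [Finset.sum_congr rfl (fun σ _ => by rw [hp σ, Finset.smul_sum])]
  rw [Finset.sum_comm]
  refine Finset.sum_congr rfl fun d _ => ?_
  rw [asym, Finset.smul_sum]
  refine Finset.sum_congr rfl fun σ _ => ?_
  rw [smul_comm]

lemma coeff_asym_ne {k : ℕ} (S T : Finset (Fin (k-1))) (hS : S.card = n) (hT : T.card = n)
    (hST : S ≠ T) :
    coeff (Finsupp.equivFunOnFinite.symm (fun i => ((T.orderEmbOfFin hT) i : ℕ)))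
      (asym K (Finsupp.equivFunOnFinite.symm (fun i => ((S.orderEmbOfFin hS) i : ℕ)))) = 0 := by
  rw [coeff_asym]
  refine Finset.sum_eq_zero (fun σ _ => ?_)
  rw [if_neg]
  intro h
  apply hST
  have hr := congrArg (fun f : Fin n →₀ ℕ => Set.range ⇑f) h
  simp only [range_mapDomain_perm] at hr
  have hc : ∀ (U : Finset (Fin (k-1))) (hU : U.card = n),
      Set.range ⇑(Finsupp.equivFunOnFinite.symm (fun i => ((U.orderEmbOfFin hU) i : ℕ)))
        = Fin.val '' (U : Set (Fin (k-1))) := by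
    intro U hU
    have hcoe : ⇑(Finsupp.equivFunOnFinite.symm (fun i => ((U.orderEmbOfFin hU) i : ℕ)))
        = fun i => ((U.orderEmbOfFin hU) i : ℕ) :=
      funext fun i => rfl
    rw [hcoe]
    rw [show (fun i => ((U.orderEmbOfFin hU) i : ℕ)) = Fin.val ∘ ⇑(U.orderEmbOfFin hU) from rfl]
    rw [Set.range_comp, Finset.range_orderEmbOfFin]
  rw [hc S hS, hc T hT] at hr
  exact Finset.coe_injective ((Set.image_injective.mpr Fin.val_injective) hr)

lemma exists_perm_eq {k : ℕ} (d : Fin n →₀ ℕ) (hd : Function.Injective ⇑d)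
    (hlt : ∀ i, d i < k - 1) :
    ∃ (S : Finset (Fin (k-1))) (hS : S.card = n) (π : Equiv.Perm (Fin n)),
      d = Finsupp.mapDomain ⇑π
        (Finsupp.equivFunOnFinite.symm (fun i => ((S.orderEmbOfFin hS) i : ℕ))) := by
  classical
  set f : Fin n → Fin (k-1) := fun i => ⟨d i, hlt i⟩ with hfdef
  have hf : Function.Injective f := by
    intro a b h
    exact hd (congrArg Fin.val h)
  set S : Finset (Fin (k-1)) := Finset.univ.image f with hSdef
  have hS : S.card = n := by
    rw [hSdef, Finset.card_image_of_injective _ hf, Finset.card_univ, Fintype.card_fin]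
  set g : Fin n → Fin (k-1) := ⇑(S.orderEmbOfFin hS) with hgdef
  have hg : Function.Injective g := (S.orderEmbOfFin hS).injective
  have hrange : Set.range f = Set.range g := by
    rw [hgdef, Finset.range_orderEmbOfFin, hSdef]
    simp
  let π : Equiv.Perm (Fin n) :=
    (Equiv.ofInjective f hf).trans ((Equiv.setCongr hrange).trans (Equiv.ofInjective g hg).symm)
  have hgπ : ∀ i, g (π i) = f i := by
    intro i
    show g ((Equiv.ofInjective g hg).symm
      (Equiv.setCongr hrange ((Equiv.ofInjective f hf) i))) = f i
    rw [Equiv.apply_ofInjective_symm hg]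
    rfl
  refine ⟨S, hS, π⁻¹, ?_⟩
  ext a
  have h1 : (Finsupp.mapDomain ⇑π⁻¹
      (Finsupp.equivFunOnFinite.symm (fun i => ((S.orderEmbOfFin hS) i : ℕ)))) (π⁻¹ (π a))
      = (Finsupp.equivFunOnFinite.symm (fun i => ((S.orderEmbOfFin hS) i : ℕ))) (π a) :=
    mapDomain_perm_apply π⁻¹ _ (π a)
  rw [(Equiv.Perm.inv_eq_iff_eq (f := π) (x := π a) (y := a)).mpr rfl] at h1
  rw [h1]
  rw [Finsupp.coe_equivFunOnFinite_symm]
  have := hgπ a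
  rw [hgdef] at this
  rw [this]

end AntiAux

theorem antisym_finrank' (K : Type) [Field K] [CharZero K] (n k : ℕ) (hk : n < k) :
    Module.finrank K (antisym K n k) = Nat.choose (k - 1) n := by
  classical
  let ι := {S : Finset (Fin (k-1)) // S.card = n}
  let dS : ι → (Fin n →₀ ℕ) := fun S =>
    Finsupp.equivFunOnFinite.symm fun i => ((S.1.orderEmbOfFin S.2) i : ℕ)
  let mk := Ideal.Quotient.mkₐ K (milnorIdeal K n k)
  let v : ι → MilnorRing K n k := fun S => mk (AntiAux.asym K (dS S))
  have hmk : ∀ (σ : Equiv.Perm (Fin n)) p, permAct K n k σ (mk p) = mk (rename ⇑σ p) := by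
    intro σ p
    simp [permAct, mk]
    rfl
  have hmem : ∀ x, x ∈ antisym K n k ↔
      ∀ σ : Equiv.Perm (Fin n), permAct K n k σ x = AntiAux.eps K σ • x := by
    intro x
    simp [antisym, Submodule.mem_iInf, Module.End.mem_eigenspace_iff, AntiAux.eps]
  have hdSinj : ∀ S : ι, Function.Injective ⇑(dS S) := by
    intro S a b h
    simp only [dS, Finsupp.coe_equivFunOnFinite_symm] at h
    exact (S.1.orderEmbOfFin S.2).injective (Fin.val_injective h)
  have hdSlt : ∀ (S : ι) (i : Fin n), dS S i < k - 1 := by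
    intro S i
    simp only [dS, Finsupp.coe_equivFunOnFinite_symm]
    exact (S.1.orderEmbOfFin S.2 i).isLt
  have hmkzero : ∀ p, p ∈ milnorIdeal K n k → mk p = 0 := by
    intro p hp
    show Ideal.Quotient.mkₐ K (milnorIdeal K n k) p = 0
    rw [Ideal.Quotient.mkₐ_eq_mk, Ideal.Quotient.eq_zero_iff_mem]
    exact hp
  have hasymspan : ∀ d : Fin n →₀ ℕ,
      mk (AntiAux.asym K d) ∈ Submodule.span K (Set.range v) := by
    intro d
    by_cases hinj : Function.Injective ⇑d
    · by_cases hbig : ∃ j, k - 1 ≤ d j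
      · obtain ⟨j, hj⟩ := hbig
        rw [hmkzero _ (AntiAux.asym_mem_milnorIdeal d j hj)]
        exact Submodule.zero_mem _
      · push_neg at hbig
        obtain ⟨S, hS, π, hd⟩ := AntiAux.exists_perm_eq d hinj hbig
        rw [hd, AntiAux.asym_mapDomain, map_smul]
        exact Submodule.smul_mem _ _ (Submodule.subset_span ⟨⟨S, hS⟩, rfl⟩)
    · rw [AntiAux.asym_eq_zero d hinj, map_zero]
      exact Submodule.zero_mem _
  have hspan : antisym K n k = Submodule.span K (Set.range v) := by
    apply le_antisymm
    · intro x hx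
      obtain ⟨p, rfl⟩ := Ideal.Quotient.mkₐ_surjective K (milnorIdeal K n k) x
      have h1 : ∀ σ : Equiv.Perm (Fin n), mk (rename ⇑σ p) = AntiAux.eps K σ • mk p := by
        intro σ
        rw [← hmk]
        exact (hmem _).1 hx σ
      have h2 : ∑ σ : Equiv.Perm (Fin n), AntiAux.eps K σ • mk (rename ⇑σ p)
          = (n.factorial : K) • mk p := by
        rw [Finset.sum_congr rfl (fun σ _ => by
          rw [h1 σ, smul_smul, AntiAux.eps_mul_self, one_smul])]
        rw [Finset.sum_const, Finset.card_univ, Fintype.card_perm, Fintype.card_fin,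
          ← Nat.cast_smul_eq_nsmul K]
      have hfac : (n.factorial : K) ≠ 0 := Nat.cast_ne_zero.2 (Nat.factorial_ne_zero n)
      have h3 : (mk p : MilnorRing K n k)
          = (n.factorial : K)⁻¹ • ∑ σ : Equiv.Perm (Fin n), AntiAux.eps K σ • mk (rename ⇑σ p) := by
        rw [h2, smul_smul, inv_mul_cancel₀ hfac, one_smul]
      rw [h3]
      refine Submodule.smul_mem _ _ ?_
      have h4 : ∑ σ : Equiv.Perm (Fin n), AntiAux.eps K σ • mk (rename ⇑σ p)
          = ∑ d ∈ p.support, coeff d p • mk (AntiAux.asym K d) := by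
        have hcong := congrArg (⇑mk) (AntiAux.sum_eps_rename (K := K) p)
        rw [map_sum, map_sum] at hcong
        simpa only [map_smul] using hcong
      rw [h4]
      exact Submodule.sum_mem _ (fun d _ => Submodule.smul_mem _ _ (hasymspan d))
    · rw [Submodule.span_le]
      rintro _ ⟨S, rfl⟩
      rw [SetLike.mem_coe, hmem]
      intro σ
      rw [hmk, AntiAux.rename_asym, map_smul]
  have hind : LinearIndependent K v := by
    rw [Fintype.linearIndependent_iff]
    intro c hc T
    have hq : (∑ S : ι, c S • AntiAux.asym K (dS S)) ∈ milnorIdeal K n k := by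
      rw [← Ideal.Quotient.eq_zero_iff_mem]
      have : Ideal.Quotient.mk (milnorIdeal K n k) (∑ S : ι, c S • AntiAux.asym K (dS S))
          = mk (∑ S : ι, c S • AntiAux.asym K (dS S)) := by
        rw [show (mk : MvPolynomial (Fin n) K → MilnorRing K n k)
          = ⇑(Ideal.Quotient.mkₐ K (milnorIdeal K n k)) from rfl, Ideal.Quotient.mkₐ_eq_mk]
      rw [this, map_sum]
      simpa only [map_smul] using hc
    have hcoeff := AntiAux.coeff_eq_zero_of_mem_milnorIdeal hq (dS T) (hdSlt T)
    rw [coeff_sum] at hcoeff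
    simp only [coeff_smul] at hcoeff
    rw [Finset.sum_eq_single T] at hcoeff
    · rwa [AntiAux.coeff_asym_self _ (hdSinj T), smul_eq_mul, mul_one] at hcoeff
    · intro S _ hST
      rw [AntiAux.coeff_asym_ne S.1 T.1 S.2 T.2 (fun h => hST (Subtype.ext h)), smul_zero]
    · intro h
      exact absurd (Finset.mem_univ T) h
  rw [hspan, finrank_span_eq_card hind]
  have : Fintype.card ι = Nat.choose (k - 1) n := by
    convert Fintype.card_finset_len (α := Fin (k-1)) n using 2
    rw [Fintype.card_fin]
  exact this


/-- For `k > n`, the space of `S_n`-antisymmetric elements of the Milnor ring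
`K[x]/(x_i^{k-1})` has dimension `C(k-1, n)`. -/
theorem antisym_finrank (K : Type) [Field K] [CharZero K] (n k : ℕ) (hk : n < k) :
    Module.finrank K (antisym K n k) = Nat.choose (k - 1) n :=
  antisym_finrank' K n k hk
end

section
/- Every antisymmetric element of the Milnor ring J = k[x_1,…,x_n]/(x_1^{k−1},…,x_n^{k−1}) is divisible by the Vandermonde class w_n; equivalently, the antisymmetric part of J equals w_n · J^{S_n}. -/
open MvPolynomial

/-! ### Auxiliary lemmas -/

theorem MilnorAux.prod_primes_dvd' {α : Type*} [CommMonoidWithZero α] [IsCancelMulZero α] {ι : Type*}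
    (S : Finset ι) (p : ι → α) (hp : ∀ i ∈ S, Prime (p i))
    (hnd : ∀ i ∈ S, ∀ j ∈ S, i ≠ j → ¬ p i ∣ p j) {z : α}
    (hdvd : ∀ i ∈ S, p i ∣ z) : (∏ i ∈ S, p i) ∣ z := by
  classical
  induction S using Finset.induction_on generalizing z with
  | empty => simpa using one_dvd z
  | @insert a s ha ih =>
    rw [Finset.prod_insert ha]
    obtain ⟨z', rfl⟩ := hdvd a (Finset.mem_insert_self a s)
    have h2 : (∏ i ∈ s, p i) ∣ z' := by
      apply ih (fun i hi => hp i (Finset.mem_insert_of_mem hi))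
        (fun i hi j hj hij => hnd i (Finset.mem_insert_of_mem hi) j (Finset.mem_insert_of_mem hj) hij)
      intro i hi
      have hiz : p i ∣ p a * z' := hdvd i (Finset.mem_insert_of_mem hi)
      rcases (hp i (Finset.mem_insert_of_mem hi)).dvd_mul.mp hiz with h | h
      · exact absurd h (hnd i (Finset.mem_insert_of_mem hi) a (Finset.mem_insert_self a s)
          (by rintro rfl; exact ha hi))
      · exact h
    exact mul_dvd_mul_left (p a) h2

theorem MilnorAux.dvd_sub_bind {K : Type} [CommRing K] {n : ℕ} (d : MvPolynomial (Fin n) K)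
    (f : Fin n → MvPolynomial (Fin n) K) (h : ∀ l, d ∣ (X l - f l)) (Q : MvPolynomial (Fin n) K) :
    d ∣ Q - bind₁ f Q := by
  induction Q using MvPolynomial.induction_on with
  | C a => simp [bind₁_C_right]
  | add p q hp hq =>
    have := dvd_add hp hq
    rwa [show p - bind₁ f p + (q - bind₁ f q) = p + q - bind₁ f (p + q) by rw [map_add]; ring] at this
  | mul_X p i hp =>
    have key : p * X i - bind₁ f (p * X i) = (p - bind₁ f p) * X i + bind₁ f p * (X i - f i) := by
      rw [map_mul, bind₁_X_right]; ring
    rw [key]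
    exact dvd_add (hp.mul_right _) ((h i).mul_left _)

theorem MilnorAux.prime_X_mv {K : Type} [Field K] {n : ℕ} (i : Fin n) :
    Prime (X i : MvPolynomial (Fin n) K) := by
  cases n with
  | zero => exact absurd i.2 (by omega)
  | succ m =>
    have h0 : Prime (X 0 : MvPolynomial (Fin (m+1)) K) := by
      rw [← MulEquiv.prime_iff (finSuccEquiv K m).toMulEquiv]
      have : (finSuccEquiv K m) (X 0) = Polynomial.X := finSuccEquiv_X_zero
      rw [show (finSuccEquiv K m).toMulEquiv (X 0) = Polynomial.X from this]
      exact Polynomial.prime_X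
    have := (MulEquiv.prime_iff (renameEquiv K (Equiv.swap (0 : Fin (m+1)) i)).toMulEquiv).mpr h0
    simpa [renameEquiv_apply, Equiv.swap_apply_left] using this

theorem MilnorAux.prime_X_sub_X {K : Type} [Field K] {n : ℕ} {i j : Fin n} (hij : i ≠ j) :
    Prime (X i - X j : MvPolynomial (Fin n) K) := by
  classical
  set g : Fin n → MvPolynomial (Fin n) K := fun l => if l = j then X i - X j else X l with hg
  have hcomp : (aeval g).comp (aeval g) = AlgHom.id K (MvPolynomial (Fin n) K) := by
    apply MvPolynomial.algHom_ext
    intro l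
    by_cases hl : l = j
    · subst hl; simp [hg, if_neg hij]
    · simp [hg, hl]
  let e : MvPolynomial (Fin n) K ≃ₐ[K] MvPolynomial (Fin n) K :=
    AlgEquiv.ofAlgHom (aeval g) (aeval g) hcomp hcomp
  have he : e (X j) = X i - X j := by simp [e, hg]
  have := (MulEquiv.prime_iff (e.toMulEquiv)).mpr (prime_X_mv j)
  rwa [show e.toMulEquiv (X j) = X i - X j from he] at this

theorem MilnorAux.not_dvd_X_sub_X {K : Type} [Field K] {n : ℕ} {i j k l : Fin n}
    (hij : i < j) (hkl : k < l) (hne : (i, j) ≠ (k, l)) :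
    ¬ (X i - X j : MvPolynomial (Fin n) K) ∣ (X k - X l) := by
  classical
  intro hdvd
  have key : ∀ a : Fin n → K, eval a (X i - X j : MvPolynomial (Fin n) K) = 0 →
      eval a (X k - X l : MvPolynomial (Fin n) K) = 0 := by
    intro a ha
    obtain ⟨c, hc⟩ := hdvd
    rw [hc, map_mul, ha, zero_mul]
  by_cases hki : k ≠ i ∧ k ≠ j
  · have h1 : i ≠ k := Ne.symm hki.1
    have h2 : j ≠ k := Ne.symm hki.2
    have h3 : l ≠ k := ne_of_gt hkl
    have := key (fun m => if m = k then (1:K) else 0) (by simp [h1, h2])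
    simp [h3] at this
  · by_cases hli : l ≠ i ∧ l ≠ j
    · have h1 : i ≠ l := Ne.symm hli.1
      have h2 : j ≠ l := Ne.symm hli.2
      have h3 : k ≠ l := ne_of_lt hkl
      have := key (fun m => if m = l then (1:K) else 0) (by simp [h1, h2])
      simp [h3] at this
    · push_neg at hki hli
      apply hne
      have hk : k = i ∨ k = j := by
        by_cases h : k = i
        · exact Or.inl h
        · exact Or.inr (hki h)
      have hl : l = i ∨ l = j := by
        by_cases h : l = i
        · exact Or.inl h
        · exact Or.inr (hli h)
      rcases hk with rfl | rfl <;> rcases hl with rfl | rfl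
      · exact absurd hkl (lt_irrefl _)
      · rfl
      · exact absurd (hij.trans hkl) (lt_irrefl _)
      · exact absurd hkl (lt_irrefl _)

theorem MilnorAux.swap_neg_dvd {K : Type} [Field K] [CharZero K] {n : ℕ} {i j : Fin n} (hij : i ≠ j)
    {Q : MvPolynomial (Fin n) K} (hQ : rename ⇑(Equiv.swap i j) Q = -Q) :
    (X i - X j : MvPolynomial (Fin n) K) ∣ Q := by
  classical
  set f : Fin n → MvPolynomial (Fin n) K := fun l => if l = j then X i else X l with hf
  have hdvd : ∀ l, (X i - X j : MvPolynomial (Fin n) K) ∣ (X l - f l) := by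
    intro l
    by_cases hl : l = j
    · subst hl; simp only [hf, if_pos rfl]
      exact ⟨-1, by ring⟩
    · simp [hf, hl]
  have hfs : f ∘ (Equiv.swap i j) = f := by
    funext l
    by_cases hl : l = i
    · subst hl; simp [hf, Equiv.swap_apply_left, if_neg hij]
    · by_cases hl2 : l = j
      · subst hl2; simp [hf, Equiv.swap_apply_right]
      · simp [hf, Function.comp, Equiv.swap_apply_of_ne_of_ne hl hl2, hl2]
  have hzero : bind₁ f Q = 0 := by
    have h1 : bind₁ f Q = bind₁ f (rename (⇑(Equiv.swap i j)) Q) := by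
      rw [bind₁_rename, hfs]
    rw [hQ, map_neg] at h1
    have h2 : (2 : K) • bind₁ f Q = 0 := by
      rw [two_smul]; linear_combination h1
    rcases smul_eq_zero.mp h2 with h | h
    · exact absurd h two_ne_zero
    · exact h
  have := MilnorAux.dvd_sub_bind (X i - X j) f hdvd Q
  rwa [hzero, sub_zero] at this

theorem MilnorAux.vandermonde_eq (K : Type) [Field K] (n : ℕ) :
    vandermonde K n = (-1)^(∑ i : Fin n, (Finset.Ioi i).card) *
      (Matrix.vandermonde (fun i : Fin n => (X i : MvPolynomial (Fin n) K))).det := by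
  rw [Matrix.det_vandermonde]
  calc vandermonde K n
      = ∏ i : Fin n, ((-1)^((Finset.Ioi i).card) * ∏ j ∈ Finset.Ioi i, (X j - X i)) :=
        Finset.prod_congr rfl (fun i _ => by
          rw [← Finset.prod_const, ← Finset.prod_mul_distrib]
          exact Finset.prod_congr rfl fun j _ => by ring)
    _ = _ := by rw [Finset.prod_mul_distrib, Finset.prod_pow_eq_pow_sum]

theorem MilnorAux.rename_vandermonde (K : Type) [Field K] (n : ℕ) (σ : Equiv.Perm (Fin n)) :
    rename ⇑σ (vandermonde K n) = ((Equiv.Perm.sign σ : ℤ) : K) • vandermonde K n := by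
  set M := Matrix.vandermonde (fun i : Fin n => (X i : MvPolynomial (Fin n) K)) with hM
  have hmap : M.map ⇑((rename (R := K) ⇑σ) : MvPolynomial (Fin n) K →+* MvPolynomial (Fin n) K)
      = M.submatrix σ id := by
    ext a b
    simp [hM, Matrix.map_apply, Matrix.vandermonde_apply, map_pow]
  have hD : rename ⇑σ M.det = ((Equiv.Perm.sign σ : ℤ) : MvPolynomial (Fin n) K) * M.det := by
    rw [show (rename (R := K) ⇑σ) M.det
        = (rename (R := K) ⇑σ : MvPolynomial (Fin n) K →+* _) M.det from rfl,
      RingHom.map_det, RingHom.mapMatrix_apply, hmap, Matrix.det_permute]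
  rw [MilnorAux.vandermonde_eq, map_mul, map_pow, map_neg, map_one, hD, smul_eq_C_mul,
    map_intCast (C : K →+* MvPolynomial (Fin n) K), ← hM]
  ring

theorem MilnorAux.vandermonde_dvd {K : Type} [Field K] {n : ℕ} {Q : MvPolynomial (Fin n) K}
    (h : ∀ i j : Fin n, i < j → (X i - X j) ∣ Q) : vandermonde K n ∣ Q := by
  classical
  rw [vandermonde, ← Finset.prod_sigma Finset.univ (fun i => Finset.Ioi i)
    (fun x => (X x.1 - X x.2 : MvPolynomial (Fin n) K))]
  apply MilnorAux.prod_primes_dvd'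
  · rintro ⟨i, j⟩ hx
    rw [Finset.mem_sigma, Finset.mem_Ioi] at hx
    exact MilnorAux.prime_X_sub_X (ne_of_lt hx.2)
  · rintro ⟨i, j⟩ hx ⟨k, l⟩ hy hne
    rw [Finset.mem_sigma, Finset.mem_Ioi] at hx hy
    refine MilnorAux.not_dvd_X_sub_X hx.2 hy.2 ?_
    intro hp
    rw [Prod.mk.injEq] at hp
    obtain ⟨h1, h2⟩ := hp
    subst h1; subst h2
    exact hne rfl
  · rintro ⟨i, j⟩ hx
    rw [Finset.mem_sigma, Finset.mem_Ioi] at hx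
    exact h i j hx.2

theorem MilnorAux.vandermonde_ne_zero (K : Type) [Field K] (n : ℕ) :
    vandermonde K n ≠ 0 := by
  rw [vandermonde]
  apply Finset.prod_ne_zero_iff.mpr
  intro i _
  apply Finset.prod_ne_zero_iff.mpr
  intro j hj
  exact (MilnorAux.prime_X_sub_X (ne_of_lt (Finset.mem_Ioi.mp hj))).ne_zero

theorem MilnorAux.permAct_mk (K : Type) [Field K] (n k : ℕ) (σ : Equiv.Perm (Fin n))
    (P : MvPolynomial (Fin n) K) :
    permAct K n k σ (Ideal.Quotient.mk (milnorIdeal K n k) P)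
      = Ideal.Quotient.mk (milnorIdeal K n k) (rename ⇑σ P) := by
  simp [permAct, Ideal.Quotient.liftₐ_apply, Ideal.Quotient.lift_mk]
  rfl

theorem MilnorAux.sgn_mul_self (K : Type) [Field K] (n : ℕ) (σ : Equiv.Perm (Fin n)) :
    ((Equiv.Perm.sign σ : ℤ) : K) * ((Equiv.Perm.sign σ : ℤ) : K) = 1 := by
  have h : (Equiv.Perm.sign σ : ℤ) * (Equiv.Perm.sign σ : ℤ) = 1 := by
    rcases Int.units_eq_one_or (Equiv.Perm.sign σ) with h | h <;> rw [h] <;> rfl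
  calc ((Equiv.Perm.sign σ : ℤ) : K) * ((Equiv.Perm.sign σ : ℤ) : K)
      = (((Equiv.Perm.sign σ : ℤ) * (Equiv.Perm.sign σ : ℤ) : ℤ) : K) := by push_cast; ring
    _ = 1 := by rw [h]; norm_num

theorem MilnorAux.mk_smul (K : Type) [Field K] (n k : ℕ) (c : K) (x : MvPolynomial (Fin n) K) :
    Ideal.Quotient.mk (milnorIdeal K n k) (c • x)
      = c • Ideal.Quotient.mk (milnorIdeal K n k) x := by
  rw [← Ideal.Quotient.mkₐ_eq_mk K (milnorIdeal K n k)]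
  exact map_smul (Ideal.Quotient.mkₐ K (milnorIdeal K n k)) c x

/-- For `k > n`, the antisymmetric part of the Milnor ring equals `w_n · J^{S_n}`:
every antisymmetric element is divisible by the Vandermonde class. -/
theorem antisym_eq_vandermonde_mul_invariants (K : Type) [Field K] [CharZero K]
    (n k : ℕ) (hk : n < k) :
    antisym K n k =
      Submodule.map
        (LinearMap.mulLeft K (Ideal.Quotient.mk (milnorIdeal K n k) (vandermonde K n)))
        (Subalgebra.toSubmodule (invSubalg K n k)) := by
  classical
  apply le_antisymm
  · intro p hp
    have hp' : ∀ σ, permAct K n k σ p = ((Equiv.Perm.sign σ : ℤ) : K) • p :=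
      fun σ => Module.End.mem_eigenspace_iff.mp ((Submodule.mem_iInf _).mp hp σ)
    obtain ⟨P, rfl⟩ := Ideal.Quotient.mk_surjective p
    set Q : MvPolynomial (Fin n) K :=
      ((Nat.factorial n : K)⁻¹) •
        ∑ σ : Equiv.Perm (Fin n), ((Equiv.Perm.sign σ : ℤ) : K) • rename ⇑σ P with hQdef
    have hmkQ : Ideal.Quotient.mk (milnorIdeal K n k) Q
        = Ideal.Quotient.mk (milnorIdeal K n k) P := by
      rw [hQdef, MilnorAux.mk_smul, map_sum]
      have hterm : ∀ σ : Equiv.Perm (Fin n),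
          Ideal.Quotient.mk (milnorIdeal K n k) (((Equiv.Perm.sign σ : ℤ) : K) • rename ⇑σ P)
            = Ideal.Quotient.mk (milnorIdeal K n k) P := by
        intro σ
        rw [MilnorAux.mk_smul, ← MilnorAux.permAct_mk, hp' σ, smul_smul,
          MilnorAux.sgn_mul_self, one_smul]
      rw [Finset.sum_congr rfl (fun σ _ => hterm σ), Finset.sum_const, Finset.card_univ,
        Fintype.card_perm, Fintype.card_fin, ← Nat.cast_smul_eq_nsmul K, smul_smul,
        inv_mul_cancel₀ (Nat.cast_ne_zero.mpr (Nat.factorial_ne_zero n)), one_smul]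
    have halt : ∀ σ : Equiv.Perm (Fin n),
        rename ⇑σ Q = ((Equiv.Perm.sign σ : ℤ) : K) • Q := by
      intro σ
      rw [hQdef, map_smul, map_sum,
        smul_comm (((Equiv.Perm.sign σ : ℤ) : K)) ((Nat.factorial n : K)⁻¹)]
      congr 1
      rw [Finset.smul_sum]
      apply Fintype.sum_equiv (Equiv.mulLeft σ)
        (fun τ => rename ⇑σ (((Equiv.Perm.sign τ : ℤ) : K) • rename ⇑τ P))
        (fun τ => ((Equiv.Perm.sign σ : ℤ) : K) • ((Equiv.Perm.sign τ : ℤ) : K) • rename ⇑τ P)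
      intro τ
      simp only [Equiv.coe_mulLeft]
      rw [map_smul, rename_rename, smul_smul, Equiv.Perm.coe_mul]
      congr 1
      rw [Equiv.Perm.sign_mul]
      push_cast
      rw [← mul_assoc, MilnorAux.sgn_mul_self, one_mul]
    have hdvd : ∀ i j : Fin n, i < j → (X i - X j : MvPolynomial (Fin n) K) ∣ Q := by
      intro i j hij
      apply MilnorAux.swap_neg_dvd (ne_of_lt hij)
      rw [halt (Equiv.swap i j), Equiv.Perm.sign_swap (ne_of_lt hij)]
      push_cast
      rw [neg_one_smul]
    obtain ⟨R, hQR⟩ := MilnorAux.vandermonde_dvd hdvd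
    have hσne : ∀ σ : Equiv.Perm (Fin n), ((Equiv.Perm.sign σ : ℤ) : K) ≠ 0 := by
      intro σ h
      have := MilnorAux.sgn_mul_self K n σ
      rw [h, zero_mul] at this
      exact zero_ne_one this
    have hRsym : ∀ σ : Equiv.Perm (Fin n), rename ⇑σ R = R := by
      intro σ
      have h1 : rename ⇑σ Q
          = ((Equiv.Perm.sign σ : ℤ) : K) • (vandermonde K n * rename ⇑σ R) := by
        rw [hQR, map_mul, MilnorAux.rename_vandermonde, smul_mul_assoc]
      have h2 : rename ⇑σ Q = ((Equiv.Perm.sign σ : ℤ) : K) • (vandermonde K n * R) := by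
        rw [halt σ, hQR]
      have h3 := smul_right_injective (MvPolynomial (Fin n) K) (hσne σ) (h1.symm.trans h2)
      exact mul_left_cancel₀ (MilnorAux.vandermonde_ne_zero K n) h3
    refine ⟨Ideal.Quotient.mk (milnorIdeal K n k) R, ?_, ?_⟩
    · show Ideal.Quotient.mk (milnorIdeal K n k) R ∈ invSubalg K n k
      intro σ
      rw [MilnorAux.permAct_mk, hRsym σ]
    · rw [LinearMap.mulLeft_apply, ← map_mul, ← hQR, hmkQ]
  · rintro _ ⟨a, ha, rfl⟩
    refine (Submodule.mem_iInf _).mpr fun σ => Module.End.mem_eigenspace_iff.mpr ?_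
    have ha' : ∀ τ, permAct K n k τ a = a := ha
    show permAct K n k σ
        ((LinearMap.mulLeft K (Ideal.Quotient.mk (milnorIdeal K n k) (vandermonde K n))) a)
      = ((Equiv.Perm.sign σ : ℤ) : K) •
        ((LinearMap.mulLeft K (Ideal.Quotient.mk (milnorIdeal K n k) (vandermonde K n))) a)
    rw [LinearMap.mulLeft_apply, map_mul, ha' σ, MilnorAux.permAct_mk,
      MilnorAux.rename_vandermonde, MilnorAux.mk_smul, smul_mul_assoc]
end

section
/- Let I ⊆ k[x_1,…,x_n] be an ideal stable under the S_n-action permuting variables, and let I^W = I ∩ k[x]^{S_n} be its invariant part, viewed inside k[y_1,…,y_n] via the isomorphism k[x]^{S_n} ≅ k[y]. If the extension of an ideal J ⊆ k[y] to k[x] contains I, then I^W ⊆ J... specifically: for F_{k,n} and G_{k,n} as above, I_{F_{k,n}}^{S_n} ⊆ I_{G_{k,n}} as ideals of k[y_1,…,y_n]. -/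
open MvPolynomial

lemma pderiv_aeval_chain {K : Type} [CommRing K] {n : ℕ}
    (f : Fin n → MvPolynomial (Fin n) K) (p : MvPolynomial (Fin n) K) (i : Fin n) :
    pderiv i (aeval f p) = ∑ j : Fin n, aeval f (pderiv j p) * pderiv i (f j) := by
  induction p using MvPolynomial.induction_on with
  | C a => simp
  | add p q hp hq =>
      rw [map_add, map_add, hp, hq, ← Finset.sum_add_distrib]
      refine Finset.sum_congr rfl fun j _ => ?_
      simp [add_mul]
  | mul_X p s hp =>
      simp only [map_mul, aeval_X, pderiv_mul, hp, pderiv_X, Finset.sum_mul, map_add,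
        add_mul]
      rw [Finset.sum_add_distrib]
      congr 1
      · exact Finset.sum_congr rfl fun j _ => by ring
      · rw [Finset.sum_eq_single s]
        · simp
        · intro j _ hj; simp [Pi.single_apply, hj]
        · simp

lemma aeval_esymm_isSymmetric {K : Type} [CommRing K] {n : ℕ}
    (p : MvPolynomial (Fin n) K) :
    (aeval (fun j : Fin n => esymm (Fin n) K ((j : ℕ) + 1)) p).IsSymmetric := by
  intro e
  have : (rename ⇑e).comp (aeval (fun j : Fin n => esymm (Fin n) K ((j : ℕ) + 1))) =
      aeval (fun j : Fin n => esymm (Fin n) K ((j : ℕ) + 1)) := by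
    apply MvPolynomial.algHom_ext
    intro j
    simp [rename_esymm]
  exact AlgHom.congr_fun this p

/-- The invariant part of the Milnor ideal of `F_{k,n}`, viewed in `k[y]` via
`y_j = σ_j(x)`, is contained in the Milnor ideal of `G_{k,n}`: if `q(σ(x))` lies in
the Milnor ideal of `F`, then `q` lies in the Milnor ideal of `G`. -/
theorem invariant_milnor_ideal_le (K : Type) [Field K] [CharZero K] (n k : ℕ)
    (hk : n < k) (F G : MvPolynomial (Fin n) K)
    (hF : F = ∑ i : Fin n, X i ^ k)
    (hG : aeval (fun j : Fin n => esymm (Fin n) K ((j : ℕ) + 1)) G = F) :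
    ∀ q : MvPolynomial (Fin n) K,
      aeval (fun j : Fin n => esymm (Fin n) K ((j : ℕ) + 1)) q ∈
          Ideal.span (Set.range fun i : Fin n => pderiv i F) →
        q ∈ Ideal.span (Set.range fun j : Fin n => pderiv j G) := by
  intro q hq
  set σf : Fin n → MvPolynomial (Fin n) K := fun j => esymm (Fin n) K ((j : ℕ) + 1) with hσf
  set φ : MvPolynomial (Fin n) K →ₐ[K] MvPolynomial (Fin n) K := aeval σf with hφ
  -- extract coefficients
  obtain ⟨a, ha⟩ := (Submodule.mem_span_range_iff_exists_fun _).mp hq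
  simp only [smul_eq_mul] at ha
  -- chain rule: pderiv i F = ∑ j, φ (pderiv j G) * pderiv i (σf j)
  have chain : ∀ i : Fin n, pderiv i F = ∑ j : Fin n, φ (pderiv j G) * pderiv i (σf j) := by
    intro i
    rw [← hG]
    exact pderiv_aeval_chain σf G i
  -- φ q = ∑ j, b j * φ (pderiv j G)
  set b : Fin n → MvPolynomial (Fin n) K := fun j => ∑ i : Fin n, a i * pderiv i (σf j) with hb
  have key : φ q = ∑ j : Fin n, b j * φ (pderiv j G) := by
    rw [← ha]
    simp_rw [chain, Finset.mul_sum, hb, Finset.sum_mul]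
    rw [Finset.sum_comm]
    exact Finset.sum_congr rfl fun j _ => Finset.sum_congr rfl fun i _ => by ring
  -- symmetrize
  have hsymφ : ∀ p : MvPolynomial (Fin n) K, ∀ e : Equiv.Perm (Fin n),
      rename ⇑e (φ p) = φ p := fun p e => aeval_esymm_isSymmetric p e
  have key2 : ∀ e : Equiv.Perm (Fin n),
      φ q = ∑ j : Fin n, rename ⇑e (b j) * φ (pderiv j G) := by
    intro e
    calc φ q = rename ⇑e (φ q) := (hsymφ q e).symm
      _ = ∑ j : Fin n, rename ⇑e (b j) * rename ⇑e (φ (pderiv j G)) := by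
          rw [key, map_sum]; simp only [map_mul]
      _ = ∑ j : Fin n, rename ⇑e (b j) * φ (pderiv j G) := by
          exact Finset.sum_congr rfl fun j _ => by rw [hsymφ]
  -- average over the symmetric group
  set N : K := (Nat.factorial n : K) with hN
  have hN0 : N ≠ 0 := Nat.cast_ne_zero.mpr (Nat.factorial_ne_zero n)
  set B : Fin n → MvPolynomial (Fin n) K :=
    fun j => N⁻¹ • ∑ e : Equiv.Perm (Fin n), rename ⇑e (b j) with hB
  have cardPerm : (Fintype.card (Equiv.Perm (Fin n)) : K) = N := by
    rw [hN]; norm_cast; simp [Fintype.card_perm]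
  have key3 : φ q = ∑ j : Fin n, B j * φ (pderiv j G) := by
    have : (Fintype.card (Equiv.Perm (Fin n))) • φ q =
        ∑ e : Equiv.Perm (Fin n), ∑ j : Fin n, rename ⇑e (b j) * φ (pderiv j G) := by
      rw [Finset.sum_congr rfl fun e _ => (key2 e).symm, Finset.sum_const, Finset.card_univ]
    rw [Finset.sum_comm] at this
    have h2 : φ q = N⁻¹ • ((Fintype.card (Equiv.Perm (Fin n))) • φ q) := by
      rw [← Nat.cast_smul_eq_nsmul K, cardPerm, smul_smul, inv_mul_cancel₀ hN0, one_smul]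
    rw [h2, this, Finset.smul_sum]
    refine Finset.sum_congr rfl fun j _ => ?_
    rw [hB, ← Finset.sum_mul, smul_mul_assoc]
  -- B j is symmetric
  have hBsym : ∀ j : Fin n, (B j).IsSymmetric := by
    intro j e
    rw [hB]
    simp only [map_smul, map_sum, rename_rename]
    congr 1
    refine Fintype.sum_equiv (Equiv.mulLeft e) _ _ fun u => ?_
    have h : ⇑((Equiv.mulLeft e) u) = ⇑e ∘ ⇑u := by ext x; simp
    rw [h]
  -- lift B j through φ
  have hc : ∀ j : Fin n, ∃ c : MvPolynomial (Fin n) K, φ c = B j := by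
    intro j
    obtain ⟨c, hcb⟩ := (esymmAlgHom_fin_bijective K n).2 ⟨B j, hBsym j⟩
    exact ⟨c, by rw [hφ, hσf, ← esymmAlgHom_apply, hcb]⟩
  choose c hcB using hc
  -- conclude
  have final : φ q = φ (∑ j : Fin n, c j * pderiv j G) := by
    rw [key3, map_sum]
    exact Finset.sum_congr rfl fun j _ => by rw [map_mul, hcB]
  have hinj : Function.Injective φ := by
    intro p1 p2 h
    have h' : (esymmAlgHom (Fin n) K n p1).val = (esymmAlgHom (Fin n) K n p2).val := by
      rw [esymmAlgHom_apply, esymmAlgHom_apply]; exact h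
    exact esymmAlgHom_fin_injective K le_rfl (Subtype.coe_injective h')
  rw [hinj final]
  exact (Submodule.mem_span_range_iff_exists_fun _).mpr ⟨c, by simp [smul_eq_mul]⟩
end

section
/- For k > n, the polynomial G_{k,n} has an isolated singularity at the origin; equivalently, the ideal generated by its partial derivatives ∂G_{k,n}/∂y_j contains a power of the maximal ideal (y_1,…,y_n). -/
open MvPolynomial

open PowerSeries Finset

set_option linter.unusedSectionVars false
set_option maxHeartbeats 1000000
set_option synthInstance.maxHeartbeats 400000

namespace Gepner

variable (K : Type) [Field K] [CharZero K] (n : ℕ)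

local notation "R" => MvPolynomial (Fin n) K

/-- Coefficientwise partial derivative on power series. -/
noncomputable def DD (j : Fin n) : PowerSeries R →+ PowerSeries R where
  toFun F := PowerSeries.mk fun m => pderiv j (PowerSeries.coeff m F)
  map_zero' := by ext m; simp
  map_add' F G := by ext m; simp

/-- The operator `t·d/dt` on power series. -/
noncomputable def tD : PowerSeries R →+ PowerSeries R where
  toFun F := PowerSeries.mk fun m => (m : R) * PowerSeries.coeff m F
  map_zero' := by ext m; simp
  map_add' F G := by ext m; simp [mul_add]

variable {K n}

@[simp] lemma coeff_DD (j : Fin n) (m : ℕ) (F : PowerSeries R) :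
    PowerSeries.coeff m (DD K n j F) = pderiv j (PowerSeries.coeff m F) := by
  simp only [DD, AddMonoidHom.coe_mk, ZeroHom.coe_mk]; exact coeff_mk _ _

@[simp] lemma coeff_tD (m : ℕ) (F : PowerSeries R) :
    PowerSeries.coeff m (tD K n F) = (m : R) * PowerSeries.coeff m F := by
  simp only [tD, AddMonoidHom.coe_mk, ZeroHom.coe_mk]; exact coeff_mk _ _

lemma DD_mul (j : Fin n) (F G : PowerSeries R) :
    DD K n j (F * G) = DD K n j F * G + F * DD K n j G := by
  apply PowerSeries.ext; intro m
  simp only [coeff_DD, PowerSeries.coeff_mul, map_sum, pderiv_mul, map_add]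
  rw [Finset.sum_add_distrib]

lemma tD_mul (F G : PowerSeries R) :
    tD K n (F * G) = tD K n F * G + F * tD K n G := by
  apply PowerSeries.ext; intro m
  rw [map_add, coeff_tD, PowerSeries.coeff_mul, PowerSeries.coeff_mul, PowerSeries.coeff_mul,
    Finset.mul_sum, ← Finset.sum_add_distrib]
  refine Finset.sum_congr rfl fun x hx => ?_
  rw [Finset.HasAntidiagonal.mem_antidiagonal] at hx
  rw [coeff_tD, coeff_tD, ← hx]
  push_cast
  ring

lemma DD_one (j : Fin n) : DD K n j (1 : PowerSeries R) = 0 := by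
  apply PowerSeries.ext; intro m
  simp only [coeff_DD, PowerSeries.coeff_one, map_zero]
  split_ifs <;> simp [pderiv_one]

lemma tD_one : tD K n (1 : PowerSeries R) = 0 := by
  apply PowerSeries.ext; intro m
  simp only [coeff_tD, PowerSeries.coeff_one, map_zero]
  split_ifs with h <;> simp [h]


variable (K n) in
/-- The generating polynomial `E(t) = 1 + ∑ (-1)^{j+1} e_{j+1} t^{j+1}`, with `e_{j+1}`
rendered as the variable `X j`. -/
noncomputable def Eps : PowerSeries R :=
  1 + ∑ j : Fin n, PowerSeries.C ((-1) ^ ((j : ℕ) + 1) * X j) * PowerSeries.X ^ ((j : ℕ) + 1)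

lemma coeff_Eps (a : ℕ) :
    PowerSeries.coeff a (Eps K n) =
      if h : 1 ≤ a ∧ a ≤ n then (-1) ^ a * X (⟨a - 1, by omega⟩ : Fin n)
      else if a = 0 then 1 else 0 := by
  rw [Eps, map_add, map_sum, PowerSeries.coeff_one]
  simp only [PowerSeries.coeff_C_mul, PowerSeries.coeff_X_pow]
  by_cases h : 1 ≤ a ∧ a ≤ n
  · rw [dif_pos h, if_neg (by omega), zero_add,
      Finset.sum_eq_single (⟨a - 1, by omega⟩ : Fin n)]
    · rw [if_pos (by simp only [Fin.val_mk]; omega), mul_one]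
      congr 2
      simp only [Fin.val_mk]
      omega
    · intro b _ hb
      rw [if_neg fun hab => hb (Fin.ext (by simp only [Fin.val_mk]; omega)), mul_zero]
    · simp
  · rw [dif_neg h, Finset.sum_eq_zero fun b _ => ?_, add_zero]
    have hb := b.isLt
    rw [if_neg (by omega), mul_zero]

lemma constantCoeff_Eps : PowerSeries.constantCoeff (Eps K n) = 1 := by
  rw [← coeff_zero_eq_constantCoeff_apply, coeff_Eps]
  norm_num

variable (K n) in
/-- `H(t) = E(t)⁻¹`, generating series of complete homogeneous symmetric functions. -/
noncomputable def Hps : PowerSeries R := PowerSeries.invOfUnit (Eps K n) 1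

lemma EH : Eps K n * Hps K n = 1 :=
  PowerSeries.mul_invOfUnit _ _ (by simp [constantCoeff_Eps])

variable (K n) in
/-- `P(t) = -t E'(t)/E(t)`, generating series of power sums. -/
noncomputable def Pps : PowerSeries R := -(tD K n (Eps K n)) * Hps K n

variable (K n) in
/-- Coefficients of `H(t)`. -/
noncomputable def Hc (m : ℕ) : R := PowerSeries.coeff m (Hps K n)

variable (K n) in
/-- Coefficients of `P(t)`. -/
noncomputable def Pc (m : ℕ) : R := PowerSeries.coeff m (Pps K n)

lemma Pc_zero : Pc K n 0 = 0 := by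
  have h0 : PowerSeries.coeff 0 (tD K n (Eps K n)) = 0 := by
    rw [coeff_tD]; simp
  rw [Pc, Pps, PowerSeries.coeff_mul]
  simp [h0]

lemma DD_C_X_pow (j : Fin n) (c : R) (p : ℕ) :
    DD K n j (PowerSeries.C c * PowerSeries.X ^ p)
      = PowerSeries.C (pderiv j c) * PowerSeries.X ^ p := by
  apply PowerSeries.ext; intro m
  rw [coeff_DD, PowerSeries.coeff_C_mul_X_pow, PowerSeries.coeff_C_mul_X_pow]
  split_ifs <;> simp

lemma tD_C_X_pow (c : R) (p : ℕ) :
    tD K n (PowerSeries.C c * PowerSeries.X ^ p)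
      = PowerSeries.C ((p : R) * c) * PowerSeries.X ^ p := by
  apply PowerSeries.ext; intro m
  rw [coeff_tD, PowerSeries.coeff_C_mul_X_pow, PowerSeries.coeff_C_mul_X_pow]
  split_ifs with h
  · rw [h]
  · rw [mul_zero]

lemma DD_tD (j : Fin n) (F : PowerSeries R) :
    DD K n j (tD K n F) = tD K n (DD K n j F) := by
  apply PowerSeries.ext; intro m
  have hC : ((m : ℕ) : R) = MvPolynomial.C ((m : ℕ) : K) := by simp
  rw [coeff_DD, coeff_tD, coeff_tD, coeff_DD, hC, pderiv_C_mul]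

lemma DD_Eps (j : Fin n) :
    DD K n j (Eps K n)
      = PowerSeries.C ((-1) ^ ((j : ℕ) + 1)) * PowerSeries.X ^ ((j : ℕ) + 1) := by
  have hC : ∀ b : Fin n, ((-1 : R) ^ ((b : ℕ) + 1)) =
      MvPolynomial.C ((-1 : K) ^ ((b : ℕ) + 1)) := by intro b; simp
  rw [Eps, map_add, DD_one, zero_add, map_sum, Finset.sum_eq_single j]
  · rw [DD_C_X_pow]
    have : pderiv j ((-1 : R) ^ ((j : ℕ) + 1) * X j) = (-1) ^ ((j : ℕ) + 1) := by
      rw [hC j, pderiv_C_mul, pderiv_X_self, mul_one, ← hC j]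
    rw [this]
  · intro b _ hb
    rw [DD_C_X_pow]
    have : pderiv j ((-1 : R) ^ ((b : ℕ) + 1) * X b) = 0 := by
      rw [hC b, pderiv_C_mul, pderiv_X_of_ne hb, mul_zero]
    rw [this, map_zero, zero_mul]
  · simp

lemma DD_Hps (j : Fin n) :
    DD K n j (Hps K n) = -(DD K n j (Eps K n) * Hps K n ^ 2) := by
  have h := congrArg (DD K n j) EH
  rw [DD_mul, DD_one] at h
  linear_combination (Hps K n) * h - (DD K n j (Hps K n)) * (EH (K := K) (n := n))

lemma tD_Hps : tD K n (Hps K n) = Pps K n * Hps K n := by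
  have h := congrArg (tD K n) EH
  rw [tD_mul, tD_one] at h
  rw [Pps]
  linear_combination (Hps K n) * h - (tD K n (Hps K n)) * (EH (K := K) (n := n))

lemma key_b (j : Fin n) :
    DD K n j (Pps K n)
      = PowerSeries.C ((-1) ^ (j : ℕ)) * PowerSeries.X ^ ((j : ℕ) + 1) *
          ((((j : ℕ) + 1 : ℕ) : PowerSeries R) * Hps K n + tD K n (Hps K n)) := by
  have h1 : DD K n j (Pps K n)
      = -(tD K n (DD K n j (Eps K n))) * Hps K n
        + (-(tD K n (Eps K n))) * DD K n j (Hps K n) := by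
    rw [Pps, DD_mul, map_neg, DD_tD]
  rw [h1, DD_Hps, DD_Eps, tD_C_X_pow, tD_Hps, Pps]
  rw [show ((((j : ℕ) + 1 : ℕ)) : PowerSeries R)
      = PowerSeries.C ((((j : ℕ) + 1 : ℕ)) : R) from (map_natCast (PowerSeries.C) _).symm]
  rw [show ((-1 : R) ^ ((j : ℕ) + 1)) = -(-1 : R) ^ (j : ℕ) by rw [pow_succ]; ring]
  simp only [map_mul, map_neg, map_add, map_pow, map_one, map_natCast]
  ring

lemma pderiv_Pc (j : Fin n) (m : ℕ) (h : (j : ℕ) + 1 ≤ m) :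
    pderiv j (Pc K n m) = (-1) ^ (j : ℕ) * (m : R) * Hc K n (m - ((j : ℕ) + 1)) := by
  have hb := congrArg (PowerSeries.coeff m) (key_b (K := K) (n := n) j)
  rw [coeff_DD] at hb
  set r := m - ((j : ℕ) + 1) with hr
  have hm : r + ((j : ℕ) + 1) = m := by omega
  rw [mul_assoc, PowerSeries.coeff_C_mul, ← hm, PowerSeries.coeff_X_pow_mul, map_add,
    show ((((j : ℕ) + 1 : ℕ)) : PowerSeries R)
      = PowerSeries.C ((((j : ℕ) + 1 : ℕ)) : R) from (map_natCast (PowerSeries.C) _).symm,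
    PowerSeries.coeff_C_mul, coeff_tD] at hb
  rw [Pc, ← hm, hb, ← Hc]
  push_cast
  ring

lemma key_a_series : Eps K n * Pps K n = -(tD K n (Eps K n)) := by
  rw [Pps]
  linear_combination (-(tD K n (Eps K n))) * (EH (K := K) (n := n))

lemma key_a (r : ℕ) :
    ∑ x ∈ antidiagonal r, PowerSeries.coeff x.1 (Eps K n) * Pc K n x.2
      = -((r : R) * PowerSeries.coeff r (Eps K n)) := by
  have h := congrArg (PowerSeries.coeff r) (key_a_series (K := K) (n := n))
  rw [PowerSeries.coeff_mul, map_neg, coeff_tD] at h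
  exact h

lemma EH_coeff (r : ℕ) :
    ∑ x ∈ antidiagonal r, PowerSeries.coeff x.1 (Eps K n) * Hc K n x.2
      = if r = 0 then 1 else 0 := by
  have h := congrArg (PowerSeries.coeff r) (EH (K := K) (n := n))
  rw [PowerSeries.coeff_mul, PowerSeries.coeff_one] at h
  exact h

variable (K n) in
/-- The substitution `y_j ↦ e_{j+1}`. -/
noncomputable def phi : MvPolynomial (Fin n) K →ₐ[K] MvPolynomial (Fin n) K :=
  aeval (fun j : Fin n => esymm (Fin n) K ((j : ℕ) + 1))

lemma esymm_big {a : ℕ} (ha : n < a) : esymm (Fin n) K a = 0 := by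
  rw [esymm, Finset.powersetCard_eq_empty.2 (by simpa using ha), Finset.sum_empty]

lemma phi_coeff_Eps (a : ℕ) :
    phi K n (PowerSeries.coeff a (Eps K n)) = (-1) ^ a * esymm (Fin n) K a := by
  rw [coeff_Eps]
  split_ifs with h h0
  · rw [map_mul, map_pow, map_neg, map_one, phi, aeval_X]
    congr 2
    simp only [Fin.val_mk]
    omega
  · subst h0
    simp [esymm_zero]
  · rw [esymm_big (by omega), map_zero, mul_zero]

lemma phi_Pc (r : ℕ) (hr : 0 < r) : phi K n (Pc K n r) = psum (Fin n) K r := by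
  induction r using Nat.strong_induction_on with
  | _ r ih =>
  have hA := congrArg (phi K n) (key_a (K := K) (n := n) r)
  simp only [map_sum, map_mul, map_neg, map_natCast, phi_coeff_Eps] at hA
  have hN := mul_esymm_eq_sum (Fin n) K r
  rw [pow_succ] at hN
  have h2 : (-1 : R) ^ r * (-1) ^ r = 1 := by
    rw [← pow_add]; exact Even.neg_one_pow ⟨r, rfl⟩
  set S := ∑ a ∈ antidiagonal r with a.1 < r,
      (-1) ^ a.1 * esymm (Fin n) K a.1 * psum (Fin n) K a.2 with hS
  have hRHS : -((r : R) * ((-1) ^ r * esymm (Fin n) K r)) = S := by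
    linear_combination (-(-1 : R) ^ r) * hN + S * h2
  rw [hRHS] at hA
  rw [← Finset.sum_filter_add_sum_filter_not (antidiagonal r) (fun x => x.1 < r)] at hA
  have hzero : ∑ x ∈ antidiagonal r with ¬ x.1 < r,
      (-1) ^ x.1 * esymm (Fin n) K x.1 * phi K n (Pc K n x.2) = 0 := by
    refine Finset.sum_eq_zero fun x hx => ?_
    rw [Finset.mem_filter, Finset.HasAntidiagonal.mem_antidiagonal] at hx
    have hx2 : x.2 = 0 := by omega
    rw [hx2, Pc_zero, map_zero, mul_zero]
  rw [hzero, add_zero] at hA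
  have hsub : ∑ x ∈ antidiagonal r with x.1 < r,
      (-1) ^ x.1 * esymm (Fin n) K x.1 * (phi K n (Pc K n x.2) - psum (Fin n) K x.2) = 0 := by
    simp only [mul_sub]
    rw [Finset.sum_sub_distrib, hA, hS, sub_self]
  rw [Finset.sum_eq_single_of_mem ((0, r) : ℕ × ℕ)] at hsub
  · simpa [esymm_zero, sub_eq_zero] using hsub
  · rw [Finset.mem_filter, Finset.HasAntidiagonal.mem_antidiagonal]
    exact ⟨by omega, hr⟩
  · intro x hx hne
    rw [Finset.mem_filter, Finset.HasAntidiagonal.mem_antidiagonal] at hx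
    have hx1 : 0 < x.1 := by
      rcases Nat.eq_zero_or_pos x.1 with h0 | h0
      · exact absurd (Prod.ext h0 (by omega)) hne
      · exact h0
    rw [ih x.2 (by omega) (by omega), sub_self, mul_zero]

section Quot

variable (J : Ideal (MvPolynomial (Fin n) K)) (d : ℕ)

variable (K n) in
/-- Truncation of `E` in the quotient ring. -/
noncomputable def epQ : Polynomial (MvPolynomial (Fin n) K ⧸ J) :=
  1 + ∑ j : Fin n,
    Polynomial.C (Ideal.Quotient.mk J ((-1) ^ ((j : ℕ) + 1) * X j)) * Polynomial.X ^ ((j : ℕ) + 1)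

variable (K n) in
/-- Truncation of `H` in the quotient ring. -/
noncomputable def fpQ : Polynomial (MvPolynomial (Fin n) K ⧸ J) :=
  ∑ m ∈ Finset.range d, Polynomial.C (Ideal.Quotient.mk J (Hc K n m)) * Polynomial.X ^ m

lemma coeff_epQ (a : ℕ) :
    (epQ K n J).coeff a = Ideal.Quotient.mk J (PowerSeries.coeff a (Eps K n)) := by
  rw [coeff_Eps, epQ, Polynomial.coeff_add, Polynomial.coeff_one, Polynomial.finset_sum_coeff]
  simp only [Polynomial.coeff_C_mul, Polynomial.coeff_X_pow, mul_ite, mul_one, mul_zero]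
  by_cases h : 1 ≤ a ∧ a ≤ n
  · rw [if_neg (show ¬ a = 0 by omega), zero_add, dif_pos h,
      Finset.sum_eq_single (⟨a - 1, by omega⟩ : Fin n)]
    · rw [if_pos (by simp only [Fin.val_mk]; omega)]
      have ha : a - 1 + 1 = a := by omega
      simp only [Fin.val_mk, ha]
    · intro b _ hb
      exact if_neg fun hab => hb (Fin.ext (by simp only [Fin.val_mk]; omega))
    · intro hmem
      exact absurd (Finset.mem_univ _) hmem
  · rw [dif_neg h, Finset.sum_eq_zero fun b _ => if_neg (by have := b.isLt; omega), add_zero]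
    by_cases h0 : a = 0
    · rw [if_pos h0, if_pos h0, map_one]
    · rw [if_neg h0, if_neg h0, map_zero]

lemma coeff_fpQ (a : ℕ) :
    (fpQ K n J d).coeff a = if a < d then Ideal.Quotient.mk J (Hc K n a) else 0 := by
  rw [fpQ, Polynomial.finset_sum_coeff]
  simp only [Polynomial.coeff_C_mul, Polynomial.coeff_X_pow, mul_ite, mul_one, mul_zero]
  rw [Finset.sum_ite_eq (Finset.range d) a (fun m' => Ideal.Quotient.mk J (Hc K n m'))]
  simp [Finset.mem_range]

lemma epQ_coe :
    ((epQ K n J : Polynomial (MvPolynomial (Fin n) K ⧸ J)) :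
        PowerSeries (MvPolynomial (Fin n) K ⧸ J))
      = PowerSeries.map (Ideal.Quotient.mk J) (Eps K n) := by
  apply PowerSeries.ext; intro a
  rw [Polynomial.coeff_coe, coeff_epQ, PowerSeries.coeff_map]

end Quot

end Gepner

open Gepner in
/-- For `k > n`, the Gepner polynomial `G_{k,n}` has an isolated singularity at the
origin: the ideal generated by its partial derivatives contains a power of the maximal
ideal `(y_1,…,y_n)`. -/
theorem gepner_isolated_singularity (K : Type) [Field K] [CharZero K] (n k : ℕ)
    (hn : 0 < n) (hk : n < k) (G : MvPolynomial (Fin n) K)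
    (hG : aeval (fun j : Fin n => esymm (Fin n) K ((j : ℕ) + 1)) G
        = ∑ i : Fin n, X i ^ k) :
    ∃ m : ℕ,
      (Ideal.span (Set.range (X : Fin n → MvPolynomial (Fin n) K))) ^ m ≤
        Ideal.span (Set.range fun j : Fin n => pderiv j G) := by
  classical
  -- `G` is the `k`-th Newton polynomial `Pc K n k`.
  have hinj : Function.Injective (phi K n) := by
    intro p q hpq
    refine esymmAlgHom_fin_injective (R := K) (n := n) (m := n) le_rfl (Subtype.ext ?_)
    rw [esymmAlgHom_apply, esymmAlgHom_apply]
    exact hpq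
  have hGP : G = Pc K n k := by
    apply hinj
    rw [phi_Pc k (by omega)]
    exact hG.trans rfl
  subst hGP
  set J : Ideal (MvPolynomial (Fin n) K) :=
    Ideal.span (Set.range fun j : Fin n => pderiv j (Pc K n k)) with hJ
  have hkK : ((k : K)) ≠ 0 := Nat.cast_ne_zero.2 (by omega)
  -- the complete homogeneous polynomials `Hc (k - 1), …, Hc (k - n)` generate `J`
  have hgen : ∀ j : Fin n, Hc K n (k - ((j : ℕ) + 1)) ∈ J := by
    intro j
    have hd := pderiv_Pc (K := K) (n := n) j k (by have := j.isLt; omega)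
    have heq : Hc K n (k - ((j : ℕ) + 1))
        = MvPolynomial.C ((-1) ^ (j : ℕ) * (k : K)⁻¹) * pderiv j (Pc K n k) := by
      rw [hd]
      have h1 : ((k : ℕ) : MvPolynomial (Fin n) K) = MvPolynomial.C ((k : K)) := by simp
      have h2 : ((-1 : MvPolynomial (Fin n) K) ^ (j : ℕ))
          = MvPolynomial.C ((-1 : K) ^ (j : ℕ)) := by simp
      rw [h1, h2, ← mul_assoc, ← map_mul, ← map_mul]
      have h3 : (-1 : K) ^ (j : ℕ) * (k : K)⁻¹ * ((-1) ^ (j : ℕ) * (k : K)) = 1 := by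
        rw [mul_mul_mul_comm, ← pow_add, Even.neg_one_pow ⟨(j : ℕ), rfl⟩, one_mul,
          inv_mul_cancel₀ hkK]
      rw [h3, map_one, one_mul]
    rw [heq]
    exact Ideal.mul_mem_left _ _ (Ideal.subset_span ⟨j, rfl⟩)
  -- all `Hc m` for `m ≥ k - n` lie in `J`
  have hHmem : ∀ m : ℕ, k - n ≤ m → Hc K n m ∈ J := by
    intro m
    induction m using Nat.strong_induction_on with
    | _ m ih =>
    intro hm
    by_cases hmk : m < k
    · have hj : k - 1 - m < n := by omega
      have hidx : k - (((⟨k - 1 - m, hj⟩ : Fin n) : ℕ) + 1) = m := by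
        simp only [Fin.val_mk]; omega
      rw [← hidx]
      exact hgen _
    · push_neg at hmk
      have h0 := EH_coeff (K := K) (n := n) m
      rw [if_neg (by omega)] at h0
      have hmem : ((0, m) : ℕ × ℕ) ∈ Finset.HasAntidiagonal.antidiagonal m := by simp
      rw [← Finset.add_sum_erase _ _ hmem] at h0
      have hE0 : PowerSeries.coeff 0 (Eps K n) = 1 := by
        rw [coeff_Eps]; norm_num
      rw [hE0, one_mul] at h0
      rw [eq_neg_of_add_eq_zero_left h0]
      refine J.neg_mem (Ideal.sum_mem _ fun x hx => ?_)
      rw [Finset.mem_erase, Finset.HasAntidiagonal.mem_antidiagonal] at hx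
      obtain ⟨hne, hsum⟩ := hx
      by_cases hx1 : n < x.1
      · have hz : PowerSeries.coeff x.1 (Eps K n) = 0 := by
          rw [coeff_Eps, dif_neg (by omega), if_neg (by omega)]
        rw [hz, zero_mul]
        exact J.zero_mem
      · have hx1pos : 0 < x.1 := by
          rcases Nat.eq_zero_or_pos x.1 with h | h
          · exact absurd (Prod.ext h (by omega)) hne
          · exact h
        exact Ideal.mul_mem_left _ _ (ih x.2 (by omega) (by omega))
  -- in the quotient ring, `fpQ * epQ = 1`
  have hfp_coe : ((fpQ K n J (k - n) : Polynomial (MvPolynomial (Fin n) K ⧸ J)) :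
        PowerSeries (MvPolynomial (Fin n) K ⧸ J))
      = PowerSeries.map (Ideal.Quotient.mk J) (Hps K n) := by
    apply PowerSeries.ext; intro a
    rw [Polynomial.coeff_coe, coeff_fpQ, PowerSeries.coeff_map]
    by_cases h : a < k - n
    · rw [if_pos h]; rfl
    · rw [if_neg h]
      exact (Ideal.Quotient.eq_zero_iff_mem.2 (hHmem a (by omega))).symm
  have hfe : fpQ K n J (k - n) * epQ K n J = 1 := by
    have hco : ((fpQ K n J (k - n) * epQ K n J : Polynomial (MvPolynomial (Fin n) K ⧸ J)) :
          PowerSeries (MvPolynomial (Fin n) K ⧸ J))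
        = ((1 : Polynomial (MvPolynomial (Fin n) K ⧸ J)) :
          PowerSeries (MvPolynomial (Fin n) K ⧸ J)) := by
      rw [Polynomial.coe_mul, hfp_coe, epQ_coe, Polynomial.coe_one, ← map_mul, mul_comm, EH,
        map_one]
    exact Polynomial.coe_injective _ hco
  have hunit : IsUnit (epQ K n J) :=
    IsUnit.of_mul_eq_one_right (fpQ K n J (k - n)) hfe
  obtain ⟨-, hnilc⟩ := Polynomial.isUnit_iff_coeff_isUnit_isNilpotent.mp hunit
  -- the variables are nilpotent in the quotient
  have hnilX : ∀ j : Fin n, IsNilpotent (Ideal.Quotient.mk J (X j)) := by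
    intro j
    have hni := hnilc ((j : ℕ) + 1) (by omega)
    rw [coeff_epQ, coeff_Eps, dif_pos ⟨by omega, by have := j.isLt; omega⟩] at hni
    have hjj : (⟨(j : ℕ) + 1 - 1, by omega⟩ : Fin n) = j := Fin.ext (by simp)
    rw [hjj] at hni
    have h2 := (Commute.all (Ideal.Quotient.mk J ((-1 : MvPolynomial (Fin n) K) ^ ((j : ℕ) + 1)))
      _).isNilpotent_mul_left hni
    rw [← map_mul, ← mul_assoc, ← pow_add, Even.neg_one_pow ⟨(j : ℕ) + 1, rfl⟩, one_mul] at h2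
    exact h2
  have hNoeth : IsNoetherianRing (MvPolynomial (Fin n) K ⧸ J) := by infer_instance
  obtain ⟨m, hm⟩ := IsNoetherianRing.isNilpotent_nilradical (MvPolynomial (Fin n) K ⧸ J)
  refine ⟨m, fun x hx => ?_⟩
  have hmap : Ideal.map (Ideal.Quotient.mk J)
        (Ideal.span (Set.range (X : Fin n → MvPolynomial (Fin n) K)))
      ≤ nilradical (MvPolynomial (Fin n) K ⧸ J) := by
    rw [Ideal.map_span]
    refine Ideal.span_le.2 ?_
    rintro y ⟨y', ⟨j, rfl⟩, rfl⟩
    exact mem_nilradical.2 (hnilX j)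
  have h1 : Ideal.Quotient.mk J x ∈ (Ideal.map (Ideal.Quotient.mk J)
      (Ideal.span (Set.range (X : Fin n → MvPolynomial (Fin n) K)))) ^ m := by
    rw [← Ideal.map_pow]
    exact Ideal.mem_map_of_mem _ hx
  have h2 := Ideal.pow_right_mono hmap m h1
  rw [hm] at h2
  rw [Submodule.zero_eq_bot, Ideal.mem_bot] at h2
  exact Ideal.Quotient.eq_zero_iff_mem.1 h2
end

section
/- For k > n, multiplication by the Vandermonde class w_n gives a k-linear isomorphism from J_{F_{k,n}}^{S_n}/ker(w_n·) onto the antisymmetric part of J_{F_{k,n}}; in particular dim_k (J_{F_{k,n}}^{S_n}/ker(w_n·)) = C(k−1, n). -/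
open MvPolynomial

set_option maxHeartbeats 1000000
set_option synthInstance.maxHeartbeats 100000

namespace VMQI

variable {K : Type} [Field K] {n k : ℕ}

noncomputable def em (m : Fin n → Fin (k - 1)) : Fin n →₀ ℕ :=
  Finsupp.equivFunOnFinite.symm fun i => (m i : ℕ)

@[simp] lemma em_apply (m : Fin n → Fin (k - 1)) (i : Fin n) : em m i = (m i : ℕ) := rfl

lemma em_injective : Function.Injective (em (n := n) (k := k)) := by
  intro a b h
  funext i
  exact Fin.val_injective (congrArg (fun f => (f : Fin n →₀ ℕ) i) h)

noncomputable def bvec (K : Type) [Field K] (n k : ℕ) (m : Fin n → Fin (k - 1)) :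
    MilnorRing K n k :=
  Ideal.Quotient.mk _ (monomial (em m) 1)

lemma coeff_em_eq_zero_of_mem {p : MvPolynomial (Fin n) K} (hp : p ∈ milnorIdeal K n k)
    (m : Fin n → Fin (k - 1)) : coeff (em m) p = 0 := by
  rw [milnorIdeal, Ideal.mem_span_range_iff_exists_fun] at hp
  obtain ⟨c, rfl⟩ := hp
  rw [coeff_sum]
  refine Finset.sum_eq_zero fun i _ => ?_
  have : (X i : MvPolynomial (Fin n) K) ^ (k - 1) = monomial (Finsupp.single i (k-1)) 1 := by
    simp [X_pow_eq_monomial]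
  rw [this, coeff_mul_monomial']
  rw [if_neg]
  intro hle
  have h1 := hle i
  rw [Finsupp.single_apply, if_pos rfl] at h1
  have h2 := (m i).isLt
  rw [em_apply] at h1
  omega

lemma mk_C_mul (c : K) (p : MvPolynomial (Fin n) K) :
    Ideal.Quotient.mk (milnorIdeal K n k) (C c * p) =
      c • Ideal.Quotient.mk (milnorIdeal K n k) p := by
  have hC : (C c : MvPolynomial (Fin n) K) = algebraMap K _ c := rfl
  rw [map_mul, hC, ← Ideal.Quotient.mkₐ_eq_mk K, AlgHom.commutes, ← Algebra.smul_def]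

lemma bvec_li : LinearIndependent K (bvec K n k) := by
  rw [Fintype.linearIndependent_iff]
  intro c hc m0
  have h0 : Ideal.Quotient.mk (milnorIdeal K n k) (∑ m, monomial (em m) (c m)) = 0 := by
    rw [map_sum, ← hc]
    refine Finset.sum_congr rfl fun m _ => ?_
    rw [bvec, ← mk_C_mul, C_mul_monomial, mul_one]
  rw [Ideal.Quotient.eq_zero_iff_mem] at h0
  have h2 := coeff_em_eq_zero_of_mem h0 m0
  rw [coeff_sum] at h2
  simpa [coeff_monomial, em_injective.eq_iff] using h2

lemma bvec_span (p : MvPolynomial (Fin n) K) :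
    Ideal.Quotient.mk (milnorIdeal K n k) p ∈ Submodule.span K (Set.range (bvec K n k)) := by
  induction p using MvPolynomial.induction_on' with
  | monomial d c =>
    by_cases h : ∀ i, (d i : ℕ) < k - 1
    · have hd : d = em (fun i => ⟨d i, h i⟩) := by ext i; simp [em]
      rw [hd, ← mul_one c, ← C_mul_monomial, mk_C_mul]
      exact Submodule.smul_mem _ _ (Submodule.subset_span ⟨_, rfl⟩)
    · push_neg at h
      obtain ⟨i, hi⟩ := h
      have hle : Finsupp.single i (k - 1) ≤ d := by
        rw [Finsupp.single_le_iff]; exact hi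
      have hfac : monomial d c =
          X i ^ (k - 1) * monomial (d - Finsupp.single i (k - 1)) c := by
        rw [X_pow_eq_monomial, monomial_mul, one_mul, add_tsub_cancel_of_le hle]
      have hmem : monomial d c ∈ milnorIdeal K n k := by
        rw [hfac]
        exact Ideal.mul_mem_right _ _ (Ideal.subset_span ⟨i, rfl⟩)
      rw [Ideal.Quotient.eq_zero_iff_mem.2 hmem]
      exact Submodule.zero_mem _
  | add p q hp hq => rw [RingHom.map_add]; exact Submodule.add_mem _ hp hq

noncomputable def mbasis (K : Type) [Field K] (n k : ℕ) :
    Module.Basis (Fin n → Fin (k - 1)) K (MilnorRing K n k) :=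
  Module.Basis.mk bvec_li (by
    intro x _
    obtain ⟨p, rfl⟩ := Ideal.Quotient.mk_surjective x
    exact bvec_span p)

instance : Module.Finite K (MilnorRing K n k) := Module.Finite.of_basis (mbasis K n k)
lemma permAct_mk (σ : Equiv.Perm (Fin n)) (p : MvPolynomial (Fin n) K) :
    permAct K n k σ (Ideal.Quotient.mk _ p) = Ideal.Quotient.mk _ (rename σ p) := by
  simp [permAct, Ideal.Quotient.liftₐ_apply, Ideal.Quotient.lift_mk]
  rfl

lemma permAct_bvec (σ : Equiv.Perm (Fin n)) (m : Fin n → Fin (k - 1)) :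
    permAct K n k σ (bvec K n k m) = bvec K n k (m ∘ σ.symm) := by
  rw [bvec, permAct_mk, rename_monomial, bvec]
  have hd : Finsupp.mapDomain (⇑σ) (em m) = em (m ∘ ⇑σ.symm) := by
    ext j
    rw [Finsupp.mapDomain_equiv_apply]
    simp [em]
  rw [hd]

noncomputable def yv (K : Type) [Field K] (n k : ℕ) (i : Fin n) : MilnorRing K n k :=
  Ideal.Quotient.mk _ (X i)

lemma permAct_yv (σ : Equiv.Perm (Fin n)) (i : Fin n) :
    permAct K n k σ (yv K n k i) = yv K n k (σ i) := by
  rw [yv, permAct_mk, rename_X, yv]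

/-- generic: the reversed Vandermonde product as a determinant -/
lemma prodSub_eq_det {R : Type*} [CommRing R] (N : ℕ) (v : Fin N → R) :
    (∏ i : Fin N, ∏ j ∈ Finset.Ioi i, (v i - v j)) =
      (-1) ^ (∑ i : Fin N, (Finset.Ioi i).card) * (Matrix.vandermonde v).det := by
  rw [Matrix.det_vandermonde]
  have h1 : ∀ i : Fin N, ∏ j ∈ Finset.Ioi i, (v i - v j) =
      (-1 : R) ^ (Finset.Ioi i).card * ∏ j ∈ Finset.Ioi i, (v j - v i) := by
    intro i
    rw [← Finset.prod_const, ← Finset.prod_mul_distrib]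
    exact Finset.prod_congr rfl fun j _ => by ring
  rw [Finset.prod_congr rfl fun i _ => h1 i, Finset.prod_mul_distrib,
    Finset.prod_pow_eq_pow_sum]

lemma prodSub_perm {R : Type*} [CommRing R] (N : ℕ) (v : Fin N → R) (σ : Equiv.Perm (Fin N)) :
    (∏ i : Fin N, ∏ j ∈ Finset.Ioi i, (v (σ i) - v (σ j))) =
      ((Equiv.Perm.sign σ : ℤ) : R) * ∏ i : Fin N, ∏ j ∈ Finset.Ioi i, (v i - v j) := by
  have h1 : Matrix.vandermonde (v ∘ σ) = (Matrix.vandermonde v).submatrix σ id := by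
    ext i j; rfl
  have := prodSub_eq_det N (v ∘ σ)
  simp only [Function.comp_apply] at this
  rw [this, h1, Matrix.det_permute, prodSub_eq_det N v]
  ring

lemma smul_eq_mkC_mul (c : K) (x : MilnorRing K n k) :
    c • x = Ideal.Quotient.mk (milnorIdeal K n k) (C c) * x := by
  obtain ⟨p, rfl⟩ := Ideal.Quotient.mk_surjective x
  rw [← map_mul, mk_C_mul]

lemma mk_vandermonde :
    Ideal.Quotient.mk (milnorIdeal K n k) (vandermonde K n) =
      ∏ i : Fin n, ∏ j ∈ Finset.Ioi i, (yv K n k i - yv K n k j) := by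
  rw [vandermonde, map_prod]
  refine Finset.prod_congr rfl fun i _ => ?_
  rw [map_prod]
  exact Finset.prod_congr rfl fun j _ => by rw [map_sub]; rfl

lemma permAct_vandermonde (σ : Equiv.Perm (Fin n)) :
    permAct K n k σ (Ideal.Quotient.mk (milnorIdeal K n k) (vandermonde K n)) =
      ((Equiv.Perm.sign σ : ℤ) : K) • Ideal.Quotient.mk (milnorIdeal K n k) (vandermonde K n) := by
  rw [mk_vandermonde, map_prod]
  have : ∀ i : Fin n, permAct K n k σ (∏ j ∈ Finset.Ioi i, (yv K n k i - yv K n k j)) =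
      ∏ j ∈ Finset.Ioi i, (yv K n k (σ i) - yv K n k (σ j)) := by
    intro i
    rw [map_prod]
    exact Finset.prod_congr rfl fun j _ => by rw [map_sub, permAct_yv, permAct_yv]
  rw [Finset.prod_congr rfl fun i _ => this i, prodSub_perm]
  rw [smul_eq_mkC_mul]
  have h1 : (C (((Equiv.Perm.sign σ : ℤ) : K)) : MvPolynomial (Fin n) K) =
      ((Equiv.Perm.sign σ : ℤ) : MvPolynomial (Fin n) K) := map_intCast _ _
  rw [h1, map_intCast]
section Newton
variable {R : Type*} [CommRing R] {N : ℕ}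

noncomputable def newt (x : Fin N → R) (t : Fin N) : Polynomial R :=
  ∏ s ∈ Finset.Iio t, (Polynomial.X - Polynomial.C (x s))

lemma newt_monic (x : Fin N → R) (t : Fin N) : (newt x t).Monic :=
  Polynomial.monic_prod_of_monic _ _ fun s _ => Polynomial.monic_X_sub_C _

lemma newt_natDegree (x : Fin N → R) (t : Fin N) [Nontrivial R] :
    (newt x t).natDegree = (t : ℕ) := by
  rw [newt, Polynomial.natDegree_prod_of_monic _ _ fun s _ => Polynomial.monic_X_sub_C _]
  simp [Polynomial.natDegree_X_sub_C, Fin.card_Iio]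

lemma newt_eval (x : Fin N → R) (t : Fin N) (j : Fin N) :
    (newt x t).eval (x j) = ∏ s ∈ Finset.Iio t, (x j - x s) := by
  simp [newt, Polynomial.eval_prod]

lemma newton_coords [Nontrivial R] (x : Fin N → R) : ∀ d : ℕ, d ≤ N → ∀ p : Polynomial R,
    p.degree < (d : ℕ) →
    ∃ c : Fin N → R, (∀ t : Fin N, d ≤ (t : ℕ) → c t = 0) ∧
      p = ∑ t, Polynomial.C (c t) * newt x t := by
  intro d
  induction d with
  | zero =>
    intro _ p hp
    refine ⟨0, fun _ _ => rfl, ?_⟩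
    have hp0 : p = 0 := Polynomial.ext fun m =>
      Polynomial.coeff_eq_zero_of_degree_lt
        (lt_of_lt_of_le hp (by exact_mod_cast Nat.zero_le m))
    simp [hp0]
  | succ d ih =>
    intro hdN p hp
    have hdltN : d < N := hdN
    set t0 : Fin N := ⟨d, hdltN⟩ with ht0
    have hnd : (newt x t0).natDegree = d := newt_natDegree x t0
    have hdegnewt : (newt x t0).degree = (d : ℕ) := by
      rw [Polynomial.degree_eq_natDegree (newt_monic x t0).ne_zero, hnd]
    set q := p - Polynomial.C (p.coeff d) * newt x t0 with hq
    have hq_deg : q.degree < (d : ℕ) := by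
      rw [Polynomial.degree_lt_iff_coeff_zero]
      intro m hm
      rcases eq_or_lt_of_le hm with h | h
    -- m = d
      · subst h
        simp only [hq, Polynomial.coeff_sub, Polynomial.coeff_C_mul]
        rw [← hnd, (newt_monic x t0).coeff_natDegree, mul_one, sub_self]
      · have h1 : p.coeff m = 0 := Polynomial.coeff_eq_zero_of_degree_lt
          (lt_of_lt_of_le hp (by exact_mod_cast h))
        have h2 : (newt x t0).coeff m = 0 := Polynomial.coeff_eq_zero_of_degree_lt
          (by rw [hdegnewt]; exact_mod_cast h)
        simp [hq, h1, h2]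
    obtain ⟨c', hc'0, hc'⟩ := ih (le_trans (Nat.le_succ d) hdN) q hq_deg
    refine ⟨Function.update c' t0 (p.coeff d), ?_, ?_⟩
    · intro t ht
      have htne : t ≠ t0 := by
        intro h; rw [h, ht0] at ht; simp at ht
      rw [Function.update_of_ne htne]
      exact hc'0 t (by omega)
    · have hrw : ∀ t : Fin N, Polynomial.C (Function.update c' t0 (p.coeff d) t) * newt x t =
          Function.update (fun t => Polynomial.C (c' t) * newt x t) t0
            (Polynomial.C (p.coeff d) * newt x t0) t := by
        intro t
        by_cases ht : t = t0
        · subst ht; simp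
        · rw [Function.update_of_ne ht, Function.update_of_ne ht]
      rw [Finset.sum_congr rfl fun t _ => hrw t,
        Finset.sum_update_of_mem (Finset.mem_univ t0)]
      have hc't0 : c' t0 = 0 := hc'0 t0 le_rfl
      have hsum : ∑ t ∈ Finset.univ \ {t0}, Polynomial.C (c' t) * newt x t =
          ∑ t, Polynomial.C (c' t) * newt x t := by
        rw [Finset.sum_eq_sum_sdiff_singleton_add (Finset.mem_univ t0), hc't0]
        simp
      rw [hsum, ← hc', hq]
      ring
end Newton
lemma det_factor {R : Type*} [CommRing R] (N : ℕ) (x : Fin N → R) (μ : Fin N → ℕ) :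
    ∃ g : R, (Matrix.of fun i j : Fin N => x j ^ (μ i)).det =
      (∏ i : Fin N, ∏ j ∈ Finset.Ioi i, (x i - x j)) * g := by
  rcases subsingleton_or_nontrivial R with h | h
  · exact ⟨0, Subsingleton.elim _ _⟩
  set F : Polynomial R := ∏ s : Fin N, (Polynomial.X - Polynomial.C (x s)) with hF
  have hFmonic : F.Monic :=
    Polynomial.monic_prod_of_monic _ _ fun s _ => Polynomial.monic_X_sub_C _
  have hFdeg : F.degree = (N : ℕ) := by
    rw [Polynomial.degree_eq_natDegree hFmonic.ne_zero, hF,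
      Polynomial.natDegree_prod_of_monic _ _ fun s _ => Polynomial.monic_X_sub_C _]
    simp
  have hFeval : ∀ j, F.eval (x j) = 0 := fun j => by
    rw [hF, Polynomial.eval_prod]
    exact Finset.prod_eq_zero (Finset.mem_univ j) (by simp)
  have hrem : ∀ i : Fin N, ∃ c : Fin N → R,
      ∀ j, x j ^ (μ i) = ∑ t, c t * (newt x t).eval (x j) := by
    intro i
    set r := (Polynomial.X ^ (μ i)) %ₘ F with hr
    have hdeg : r.degree < (N : ℕ) := by
      rw [← hFdeg]; exact Polynomial.degree_modByMonic_lt _ hFmonic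
    obtain ⟨c, _, hc⟩ := newton_coords x N le_rfl r hdeg
    refine ⟨c, fun j => ?_⟩
    have hdiv := Polynomial.modByMonic_add_div (Polynomial.X ^ (μ i)) F
    calc x j ^ μ i = (Polynomial.X ^ μ i : Polynomial R).eval (x j) := by simp
      _ = (r + F * ((Polynomial.X ^ (μ i)) /ₘ F)).eval (x j) := by rw [hr, hdiv]
      _ = r.eval (x j) := by simp [hFeval j]
      _ = ∑ t, c t * (newt x t).eval (x j) := by
          rw [hc]
          simp [Polynomial.eval_finset_sum]
  choose Cm hCm using hrem
  set W : Matrix (Fin N) (Fin N) R := Matrix.of fun t j => (newt x t).eval (x j) with hW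
  have hMW : (Matrix.of fun i j : Fin N => x j ^ (μ i)) = (Matrix.of Cm) * W := by
    ext i j
    rw [Matrix.mul_apply]
    simpa [hW] using hCm i j
  have hWtri : W.BlockTriangular id := by
    intro t j hjt
    simp only [hW, Matrix.of_apply, newt_eval]
    exact Finset.prod_eq_zero (Finset.mem_Iio.2 hjt) (sub_self _)
  have hWdet : W.det = ∏ t : Fin N, ∏ s ∈ Finset.Iio t, (x t - x s) := by
    rw [Matrix.det_of_upperTriangular hWtri]
    exact Finset.prod_congr rfl fun t _ => newt_eval x t t
  have hswap : (∏ t : Fin N, ∏ s ∈ Finset.Iio t, (x t - x s)) =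
      ∏ i : Fin N, ∏ j ∈ Finset.Ioi i, (x j - x i) :=
    Finset.prod_comm' (by intro a b; simp [and_comm])
  set E := ∑ i : Fin N, (Finset.Ioi i).card with hE
  have hvdm := prodSub_eq_det N x
  rw [Matrix.det_vandermonde] at hvdm
  refine ⟨(-1 : R) ^ E * (Matrix.of Cm).det, ?_⟩
  rw [hMW, Matrix.det_mul, hWdet, hswap, hvdm]
  have h2 : (-1 : R) ^ E * (-1 : R) ^ E = 1 := by
    rw [← pow_add]; exact Even.neg_one_pow ⟨E, rfl⟩
  calc (Matrix.of Cm).det * ∏ i : Fin N, ∏ j ∈ Finset.Ioi i, (x j - x i)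
      = ((-1 : R) ^ E * (-1 : R) ^ E) *
        ((Matrix.of Cm).det * ∏ i : Fin N, ∏ j ∈ Finset.Ioi i, (x j - x i)) := by
        rw [h2, one_mul]
    _ = ((-1 : R) ^ E * ∏ i : Fin N, ∏ j ∈ Finset.Ioi i, (x j - x i)) *
        ((-1 : R) ^ E * (Matrix.of Cm).det) := by ring
/-- sign of a permutation as element of K -/
noncomputable def sgnK (K : Type) [Field K] {n : ℕ} (σ : Equiv.Perm (Fin n)) : K :=
  ((Equiv.Perm.sign σ : ℤ) : K)

lemma sgnK_mul_self (σ : Equiv.Perm (Fin n)) : sgnK K σ * sgnK K σ = 1 := by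
  rcases Int.units_eq_one_or (Equiv.Perm.sign σ) with h | h <;> rw [sgnK, h] <;> norm_num

lemma sgnK_ne_zero [CharZero K] (σ : Equiv.Perm (Fin n)) : sgnK K σ ≠ 0 := by
  rcases Int.units_eq_one_or (Equiv.Perm.sign σ) with h | h <;> rw [sgnK, h] <;> norm_num

/-- the increasing enumeration of an n-element subset of Fin (k-1) -/
noncomputable def msf (n k : ℕ) (s : {s : Finset (Fin (k - 1)) // s.card = n}) :
    Fin n → Fin (k - 1) :=
  fun i => ((s.1.orderIsoOfFin s.2) i : Fin (k - 1))

lemma msf_injective (s : {s : Finset (Fin (k - 1)) // s.card = n}) :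
    Function.Injective (msf n k s) := by
  intro a b h
  exact (s.1.orderIsoOfFin s.2).injective (Subtype.ext h)

lemma msf_image (s : {s : Finset (Fin (k - 1)) // s.card = n}) :
    Finset.image (msf n k s) Finset.univ = s.1 := by
  ext a
  simp only [Finset.mem_image, Finset.mem_univ, true_and]
  constructor
  · rintro ⟨i, rfl⟩; exact (s.1.orderIsoOfFin s.2 i).2
  · intro ha
    exact ⟨(s.1.orderIsoOfFin s.2).symm ⟨a, ha⟩, by simp [msf]⟩

/-- antisymmetrized monomial as a determinant -/
noncomputable def esv (K : Type) [Field K] (n k : ℕ)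
    (s : {s : Finset (Fin (k - 1)) // s.card = n}) : MilnorRing K n k :=
  (Matrix.of fun i j : Fin n => yv K n k j ^ ((msf n k s i : ℕ))).det

lemma bvec_eq_prod (m : Fin n → Fin (k - 1)) :
    bvec K n k m = ∏ j : Fin n, yv K n k j ^ ((m j : ℕ)) := by
  rw [bvec]
  have h1 : (monomial (em m) (1 : K)) = ∏ j : Fin n, (X j : MvPolynomial (Fin n) K) ^ (em m j) := by
    rw [monomial_eq, C_1, one_mul, Finsupp.prod_fintype]
    intro i; exact pow_zero _
  rw [h1, map_prod]
  exact Finset.prod_congr rfl fun j _ => by rw [map_pow]; rfl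

lemma sgnK_smul (σ : Equiv.Perm (Fin n)) (x : MilnorRing K n k) :
    sgnK K σ • x = ((Equiv.Perm.sign σ : ℤ) : MilnorRing K n k) * x := by
  rw [sgnK, smul_eq_mkC_mul]
  have h1 : (C (((Equiv.Perm.sign σ : ℤ) : K)) : MvPolynomial (Fin n) K) =
      ((Equiv.Perm.sign σ : ℤ) : MvPolynomial (Fin n) K) := map_intCast _ _
  rw [h1, map_intCast]

lemma esv_eq_sum (s : {s : Finset (Fin (k - 1)) // s.card = n}) :
    esv K n k s = ∑ σ : Equiv.Perm (Fin n), sgnK K σ • bvec K n k (msf n k s ∘ σ) := by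
  rw [esv, Matrix.det_apply]
  refine Finset.sum_congr rfl fun σ _ => ?_
  rw [bvec_eq_prod]
  have h1 : ∀ i : Fin n, (Matrix.of fun i j : Fin n => yv K n k j ^ ((msf n k s i : ℕ))) (σ i) i
      = yv K n k i ^ (((msf n k s ∘ σ) i : ℕ)) := fun i => rfl
  rw [Finset.prod_congr rfl fun i _ => h1 i, sgnK_smul, Units.smul_def, zsmul_eq_mul]

lemma permAct_esv (τ : Equiv.Perm (Fin n)) (s : {s : Finset (Fin (k - 1)) // s.card = n}) :
    permAct K n k τ (esv K n k s) = sgnK K τ • esv K n k s := by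
  rw [esv]
  have h1 : permAct K n k τ ((Matrix.of fun i j : Fin n =>
      yv K n k j ^ ((msf n k s i : ℕ))).det) =
      ((Matrix.of fun i j : Fin n => yv K n k j ^ ((msf n k s i : ℕ))).map
        (permAct K n k τ)).det := by
    exact (RingHom.map_det (permAct K n k τ : MilnorRing K n k →+* MilnorRing K n k) _)
  rw [h1]
  have h2 : ((Matrix.of fun i j : Fin n => yv K n k j ^ ((msf n k s i : ℕ))).map
      (permAct K n k τ)) =
      (Matrix.of fun i j : Fin n => yv K n k j ^ ((msf n k s i : ℕ))).submatrix id τ := by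
    ext i j
    simp [Matrix.map_apply, Matrix.submatrix_apply, map_pow, permAct_yv]
  rw [h2, Matrix.det_permute', sgnK_smul]

lemma permAct_permAct (ρ τ : Equiv.Perm (Fin n)) (x : MilnorRing K n k) :
    permAct K n k ρ (permAct K n k τ x) = permAct K n k (ρ * τ) x := by
  obtain ⟨p, rfl⟩ := Ideal.Quotient.mk_surjective x
  rw [permAct_mk, permAct_mk, permAct_mk, rename_rename]
  rfl
lemma mbasis_apply (m : Fin n → Fin (k - 1)) : mbasis K n k m = bvec K n k m :=
  Module.Basis.mk_apply _ _ m

lemma repr_bvec (m m0 : Fin n → Fin (k - 1)) :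
    (mbasis K n k).repr (bvec K n k m) m0 = if m = m0 then 1 else 0 := by
  rw [← mbasis_apply, (mbasis K n k).repr_self, Finsupp.single_apply]

lemma repr_sum (c : (Fin n → Fin (k - 1)) → K) (m0 : Fin n → Fin (k - 1)) :
    (mbasis K n k).repr (∑ m, c m • bvec K n k m) m0 = c m0 := by
  simp only [map_sum, map_smul, Finsupp.finset_sum_apply, Finsupp.smul_apply, repr_bvec,
    smul_eq_mul, mul_ite, mul_one, mul_zero]
  rw [Finset.sum_ite_eq' Finset.univ m0 c]
  simp

lemma mem_antisym_iff {v : MilnorRing K n k} :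
    v ∈ antisym K n k ↔ ∀ τ : Equiv.Perm (Fin n), permAct K n k τ v = sgnK K τ • v := by
  rw [antisym, Submodule.mem_iInf]
  exact forall_congr' fun τ => Module.End.mem_eigenspace_iff

lemma antisym_coord {v : MilnorRing K n k} (hv : v ∈ antisym K n k) (τ : Equiv.Perm (Fin n))
    (m : Fin n → Fin (k - 1)) :
    (mbasis K n k).repr v (m ∘ ⇑τ) = sgnK K τ * (mbasis K n k).repr v m := by
  have hτ := (mem_antisym_iff.1 hv) τ
  have hrep : v = ∑ m', (mbasis K n k).repr v m' • bvec K n k m' := by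
    conv_lhs => rw [← (mbasis K n k).sum_repr v]
    exact Finset.sum_congr rfl fun m' _ => by rw [mbasis_apply]
  have hact : permAct K n k τ v =
      ∑ m', (mbasis K n k).repr v (m' ∘ ⇑τ) • bvec K n k m' := by
    conv_lhs => rw [hrep]
    rw [map_sum]
    have h1 : ∀ m', permAct K n k τ ((mbasis K n k).repr v m' • bvec K n k m') =
        (mbasis K n k).repr v m' • bvec K n k (m' ∘ ⇑τ.symm) := by
      intro m'
      rw [map_smul, permAct_bvec]
    rw [Finset.sum_congr rfl fun m' _ => h1 m']
    refine Fintype.sum_bijective (fun m' => m' ∘ ⇑τ.symm) ?_ _ _ fun m' => ?_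
    · exact Function.bijective_iff_has_inverse.2
        ⟨fun g => g ∘ ⇑τ, fun f => by funext x; simp, fun f => by funext x; simp⟩
    · have h2 : (m' ∘ ⇑τ.symm) ∘ ⇑τ = m' := by funext x; simp
      show _ = (mbasis K n k).repr v ((m' ∘ ⇑τ.symm) ∘ ⇑τ) • bvec K n k (m' ∘ ⇑τ.symm)
      rw [h2]
  have h3 := congrArg (fun w => (mbasis K n k).repr w m) (hact.symm.trans hτ)
  rw [repr_sum] at h3
  rw [h3, map_smul, Finsupp.smul_apply, smul_eq_mul]

lemma repr_esv (s : {s : Finset (Fin (k - 1)) // s.card = n}) (m0 : Fin n → Fin (k - 1)) :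
    (mbasis K n k).repr (esv K n k s) m0 =
      ∑ σ : Equiv.Perm (Fin n), sgnK K σ * (if msf n k s ∘ ⇑σ = m0 then 1 else 0) := by
  rw [esv_eq_sum, map_sum, Finsupp.finset_sum_apply]
  exact Finset.sum_congr rfl fun σ _ => by
    rw [map_smul, Finsupp.smul_apply, repr_bvec, smul_eq_mul]

lemma msf_comp_image (s : {s : Finset (Fin (k - 1)) // s.card = n}) (σ : Equiv.Perm (Fin n)) :
    Finset.image (msf n k s ∘ ⇑σ) Finset.univ = s.1 := by
  rw [← Finset.image_image, Finset.image_univ_equiv, msf_image]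

lemma rep_unique {s s' : {s : Finset (Fin (k - 1)) // s.card = n}}
    {σ σ' : Equiv.Perm (Fin n)} (h : msf n k s ∘ ⇑σ = msf n k s' ∘ ⇑σ') :
    s = s' ∧ σ = σ' := by
  have himg : s = s' := by
    apply Subtype.ext
    rw [← msf_comp_image s σ, ← msf_comp_image s' σ', h]
  subst himg
  refine ⟨rfl, ?_⟩
  ext i : 1
  have := congrFun h i
  exact Fin.val_injective (congrArg Fin.val (msf_injective s this))

lemma exists_rep {m : Fin n → Fin (k - 1)} (hm : Function.Injective m) :
    ∃ (s : {s : Finset (Fin (k - 1)) // s.card = n}) (σ : Equiv.Perm (Fin n)),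
      msf n k s ∘ ⇑σ = m := by
  have hcard : (Finset.image m Finset.univ).card = n := by
    rw [Finset.card_image_of_injective _ hm, Finset.card_univ, Fintype.card_fin]
  refine ⟨⟨Finset.image m Finset.univ, hcard⟩, ?_⟩
  set s : {s : Finset (Fin (k - 1)) // s.card = n} := ⟨Finset.image m Finset.univ, hcard⟩
  have hmem : ∀ i, m i ∈ s.1 := fun i => Finset.mem_image_of_mem m (Finset.mem_univ i)
  set u : Fin n → Fin n := fun i => (s.1.orderIsoOfFin s.2).symm ⟨m i, hmem i⟩ with hu
  have huinj : Function.Injective u := by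
    intro a b hab
    apply hm
    have := congrArg (fun z => ((s.1.orderIsoOfFin s.2) z : Fin (k - 1))) hab
    simpa [hu] using this
  have hubij : Function.Bijective u := (Finite.injective_iff_bijective).1 huinj
  refine ⟨Equiv.ofBijective u hubij, ?_⟩
  funext i
  show msf n k s (Equiv.ofBijective u hubij i) = m i
  rw [Equiv.ofBijective_apply, msf, hu]
  simp

lemma coord_zero_of_not_inj [CharZero K] {v : MilnorRing K n k} (hv : v ∈ antisym K n k)
    {m : Fin n → Fin (k - 1)} (hm : ¬ Function.Injective m) :
    (mbasis K n k).repr v m = 0 := by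
  obtain ⟨a, b, hab, hne⟩ := Function.not_injective_iff.1 hm
  have hmτ : m ∘ ⇑(Equiv.swap a b) = m := by
    funext x
    rcases eq_or_ne x a with rfl | hxa
    · simp [Equiv.swap_apply_left, hab.symm]
    rcases eq_or_ne x b with rfl | hxb
    · simp [Equiv.swap_apply_right, hab]
    · simp [Equiv.swap_apply_of_ne_of_ne hxa hxb]
  have h1 := antisym_coord hv (Equiv.swap a b) m
  rw [hmτ] at h1
  have hsgn : sgnK K (Equiv.swap a b) = -1 := by
    rw [sgnK, Equiv.Perm.sign_swap hne]; norm_num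
  rw [hsgn, neg_one_mul] at h1
  have h2 : (2 : K) * (mbasis K n k).repr v m = 0 := by
    rw [two_mul]
    nth_rewrite 1 [h1]
    exact neg_add_cancel _
  exact (mul_eq_zero.1 h2).resolve_left two_ne_zero
lemma esv_mem (s : {s : Finset (Fin (k - 1)) // s.card = n}) :
    esv K n k s ∈ antisym K n k :=
  mem_antisym_iff.2 fun τ => permAct_esv τ s

lemma repr_esv_msf (s s0 : {s : Finset (Fin (k - 1)) // s.card = n}) :
    (mbasis K n k).repr (esv K n k s) (msf n k s0) = if s = s0 then 1 else 0 := by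
  rw [repr_esv]
  have hid : msf n k s0 ∘ ⇑(1 : Equiv.Perm (Fin n)) = msf n k s0 := by
    funext i; rfl
  rcases eq_or_ne s s0 with rfl | hne
  · rw [if_pos rfl]
    rw [Finset.sum_eq_single (1 : Equiv.Perm (Fin n))]
    · rw [hid, if_pos rfl, sgnK]; simp
    · intro σ _ hσ
      rw [if_neg, mul_zero]
      intro hcon
      exact hσ ((rep_unique (hcon.trans hid.symm)).2)
    · intro h; exact absurd (Finset.mem_univ _) h
  · rw [if_neg hne]
    refine Finset.sum_eq_zero fun σ _ => ?_
    rw [if_neg, mul_zero]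
    intro hcon
    exact hne (rep_unique (hcon.trans hid.symm)).1

lemma esv_li : LinearIndependent K (esv K n k) := by
  rw [Fintype.linearIndependent_iff]
  intro c hc s0
  have h := congrArg (fun w => (mbasis K n k).repr w (msf n k s0)) hc
  simp only [map_sum, map_smul, Finsupp.finset_sum_apply, Finsupp.smul_apply, smul_eq_mul,
    map_zero, Finsupp.coe_zero, Pi.zero_apply, repr_esv_msf, mul_ite, mul_one, mul_zero] at h
  rwa [Finset.sum_ite_eq' Finset.univ s0 c, if_pos (Finset.mem_univ _)] at h

lemma antisym_decomp [CharZero K] {v : MilnorRing K n k} (hv : v ∈ antisym K n k) :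
    v = ∑ s, ((mbasis K n k).repr v (msf n k s)) • esv K n k s := by
  apply (mbasis K n k).ext_elem
  intro m0
  have hr : (mbasis K n k).repr (∑ s, ((mbasis K n k).repr v (msf n k s)) • esv K n k s) m0 =
      ∑ s, ((mbasis K n k).repr v (msf n k s)) * (mbasis K n k).repr (esv K n k s) m0 := by
    simp only [map_sum, map_smul, Finsupp.finset_sum_apply, Finsupp.smul_apply, smul_eq_mul]
  rw [hr]
  by_cases hm0 : Function.Injective m0
  · obtain ⟨s0, σ0, hs0⟩ := exists_rep hm0
    rw [Finset.sum_eq_single s0]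
    · have h1 : (mbasis K n k).repr (esv K n k s0) m0 = sgnK K σ0 := by
        rw [repr_esv, Finset.sum_eq_single σ0]
        · rw [if_pos hs0, mul_one]
        · intro σ _ hσ
          rw [if_neg, mul_zero]
          intro hcon
          exact hσ (rep_unique (hcon.trans hs0.symm)).2
        · intro h; exact absurd (Finset.mem_univ _) h
      rw [h1, ← hs0, antisym_coord hv σ0 (msf n k s0), mul_comm]
    · intro s _ hs
      have h2 : (mbasis K n k).repr (esv K n k s) m0 = 0 := by
        rw [repr_esv]
        refine Finset.sum_eq_zero fun σ _ => ?_
        rw [if_neg, mul_zero]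
        intro hcon
        exact hs (rep_unique (hcon.trans hs0.symm)).1
      rw [h2, mul_zero]
    · intro h; exact absurd (Finset.mem_univ _) h
  · rw [coord_zero_of_not_inj hv hm0]
    refine (Finset.sum_eq_zero fun s _ => ?_).symm
    have h2 : (mbasis K n k).repr (esv K n k s) m0 = 0 := by
      rw [repr_esv]
      refine Finset.sum_eq_zero fun σ _ => ?_
      rw [if_neg, mul_zero]
      intro hcon
      exact hm0 (hcon ▸ (msf_injective s).comp σ.injective)
    rw [h2, mul_zero]

lemma finrank_antisym [CharZero K] :
    Module.finrank K (antisym K n k) = Nat.choose (k - 1) n := by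
  classical
  have li : LinearIndependent K
      (fun s : {s : Finset (Fin (k - 1)) // s.card = n} =>
        (⟨esv K n k s, esv_mem s⟩ : antisym K n k)) :=
    LinearIndependent.of_comp (antisym K n k).subtype esv_li
  have sp : ⊤ ≤ Submodule.span K
      (Set.range fun s : {s : Finset (Fin (k - 1)) // s.card = n} =>
        (⟨esv K n k s, esv_mem s⟩ : antisym K n k)) := by
    intro x _
    have hx := antisym_decomp x.2
    have hxx : x = ∑ s, ((mbasis K n k).repr x.1 (msf n k s)) •
        (⟨esv K n k s, esv_mem s⟩ : antisym K n k) := by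
      apply Subtype.ext
      simp only [AddSubmonoidClass.coe_finset_sum, SetLike.val_smul]
      exact hx
    rw [hxx]
    exact Submodule.sum_mem _ fun s _ =>
      Submodule.smul_mem _ _ (Submodule.subset_span ⟨s, rfl⟩)
  rw [Module.finrank_eq_card_basis (Module.Basis.mk li sp), Fintype.card_finset_len,
    Fintype.card_fin]
lemma esv_in_range [CharZero K] (s : {s : Finset (Fin (k - 1)) // s.card = n}) :
    ∃ g : MilnorRing K n k, (∀ τ, permAct K n k τ g = g) ∧
      Ideal.Quotient.mk (milnorIdeal K n k) (vandermonde K n) * g = esv K n k s := by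
  obtain ⟨g0, hg0⟩ := det_factor n (yv K n k) (fun i => (msf n k s i : ℕ))
  have hw : Ideal.Quotient.mk (milnorIdeal K n k) (vandermonde K n) * g0 = esv K n k s := by
    rw [mk_vandermonde, esv]
    exact hg0.symm
  have hNfac : ((n.factorial : K)) ≠ 0 := Nat.cast_ne_zero.2 (Nat.factorial_ne_zero n)
  have hme : ∀ τ, Ideal.Quotient.mk (milnorIdeal K n k) (vandermonde K n) *
      permAct K n k τ g0 = esv K n k s := by
    intro τ
    have h1 : permAct K n k τ
        (Ideal.Quotient.mk (milnorIdeal K n k) (vandermonde K n) * g0) =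
        sgnK K τ • (Ideal.Quotient.mk (milnorIdeal K n k) (vandermonde K n) *
          permAct K n k τ g0) := by
      rw [map_mul, permAct_vandermonde τ, ← sgnK, smul_mul_assoc]
    have h2 : permAct K n k τ
        (Ideal.Quotient.mk (milnorIdeal K n k) (vandermonde K n) * g0) =
        sgnK K τ • esv K n k s := by
      rw [hw]; exact permAct_esv τ s
    exact smul_right_injective _ (sgnK_ne_zero τ) (h1.symm.trans h2)
  refine ⟨((n.factorial : K))⁻¹ • ∑ τ : Equiv.Perm (Fin n), permAct K n k τ g0, ?_, ?_⟩
  · intro ρ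
    rw [map_smul, map_sum]
    congr 1
    rw [Finset.sum_congr rfl fun τ _ => permAct_permAct ρ τ g0]
    exact Fintype.sum_bijective (fun τ => ρ * τ)
      (Group.mulLeft_bijective ρ) _ _ fun τ => rfl
  · rw [mul_smul_comm, Finset.mul_sum, Finset.sum_congr rfl fun τ _ => hme τ,
      Finset.sum_const, Finset.card_univ, Fintype.card_perm, Fintype.card_fin,
      ← Nat.cast_smul_eq_nsmul K, smul_smul, inv_mul_cancel₀ hNfac, one_smul]

end VMQI

/-- For `k > n`, multiplication by the Vandermonde class `w_n` induces a linear
isomorphism `J_F^{S_n}/ker(w_n·) ≃ (antisymmetric part of J_F)`: its range is the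
antisymmetric part and `dim J_F^{S_n}/ker(w_n·) = C(k-1,n)`. -/
theorem vandermonde_mul_quotient_iso (K : Type) [Field K] [CharZero K] (n k : ℕ)
    (hk : n < k) :
    LinearMap.range
        ((LinearMap.mulLeft K
            (Ideal.Quotient.mk (milnorIdeal K n k) (vandermonde K n))).comp
          (Subalgebra.toSubmodule (invSubalg K n k)).subtype) =
      antisym K n k ∧
    Module.finrank K
        (↥(Subalgebra.toSubmodule (invSubalg K n k)) ⧸
          LinearMap.ker
            ((LinearMap.mulLeft K
                (Ideal.Quotient.mk (milnorIdeal K n k) (vandermonde K n))).comp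
              (Subalgebra.toSubmodule (invSubalg K n k)).subtype)) =
      Nat.choose (k - 1) n := by
  classical
  set f := (LinearMap.mulLeft K
      (Ideal.Quotient.mk (milnorIdeal K n k) (vandermonde K n))).comp
    (Subalgebra.toSubmodule (invSubalg K n k)).subtype with hf
  have happ : ∀ a : (Subalgebra.toSubmodule (invSubalg K n k)),
      f a = Ideal.Quotient.mk (milnorIdeal K n k) (vandermonde K n) * (a : MilnorRing K n k) :=
    fun a => rfl
  have hrange : LinearMap.range f = antisym K n k := by
    apply le_antisymm
    · rintro x ⟨⟨a, ha⟩, rfl⟩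
      have ha' : ∀ σ, permAct K n k σ a = a := ha
      rw [happ, VMQI.mem_antisym_iff]
      intro τ
      rw [map_mul, VMQI.permAct_vandermonde τ (K := K) (n := n) (k := k), ha' τ,
        smul_mul_assoc]
      rfl
    · intro v hv
      rw [VMQI.antisym_decomp hv]
      refine Submodule.sum_mem _ fun s _ => Submodule.smul_mem _ _ ?_
      obtain ⟨g, hg, hwg⟩ := VMQI.esv_in_range (K := K) s
      exact ⟨⟨g, hg⟩, hwg⟩
  refine ⟨hrange, ?_⟩
  have h1 := LinearEquiv.finrank_eq (f.quotKerEquivRange)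
  rw [h1, hrange, VMQI.finrank_antisym]
end
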